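/- arXiv:1211.1343 — 4 statements merged into one kernel-verified Lean document; each statement's English description precedes it below -/
import Mathlib

section
/- Let q ∈ (0,1) and c' ≥ 0, and let (Δ_n)_{n≥0} be a sequence of nonnegative real numbers satisfying Δ_n ≤ q·Δ_{n−1} + c'·q^{n/2}·Δ_{n−1}^{1/2} for all n ≥ 1. Then for every η with 0 < η < 1 − q^{1/2} there exists a constant C₂ such that Δ_n ≤ C₂·(q^{1/2} + η)ⁿ for all n ≥ 0. -/
/-- geometric decay for the recursion
`Δ_n ≤ q·Δ_{n−1} + c'·q^{n/2}·Δ_{n−1}^{1/2}`. -/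
theorem stmt_2 (q c' : ℝ) (hq0 : 0 < q) (hq1 : q < 1) (hc' : 0 ≤ c')
    (Δ : ℕ → ℝ) (hΔ : ∀ n, 0 ≤ Δ n)
    (hrec : ∀ n : ℕ, 1 ≤ n →
      Δ n ≤ q * Δ (n - 1) + c' * (Real.sqrt q) ^ n * Real.sqrt (Δ (n - 1))) :
    ∀ η : ℝ, 0 < η → η < 1 - Real.sqrt q →
      ∃ C₂ : ℝ, ∀ n : ℕ, Δ n ≤ C₂ * (Real.sqrt q + η) ^ n := by
  intro η hη0 hη1
  set r : ℝ := Real.sqrt q + η with hr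
  have hsq0 : 0 < Real.sqrt q := Real.sqrt_pos.2 hq0
  have hr0 : 0 < r := by positivity
  have hqsq : q ≤ Real.sqrt q := by
    nlinarith [Real.sq_sqrt hq0.le, Real.sqrt_nonneg q, Real.sqrt_le_one.2 hq1.le]
  have hqr : q < r := lt_of_le_of_lt hqsq (by linarith)
  set s : ℝ := Real.sqrt r with hs
  have hs0 : 0 < s := Real.sqrt_pos.2 hr0
  have hs2 : s ^ 2 = r := Real.sq_sqrt hr0.le
  have hqs : Real.sqrt q ≤ s := Real.sqrt_le_sqrt hqr.le
  set C₂ : ℝ := max (Δ 0) ((c' * s / (r - q)) ^ 2) with hC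
  have hC0 : 0 ≤ C₂ := le_trans (hΔ 0) (le_max_left _ _)
  have hsC2 : Real.sqrt C₂ ^ 2 = C₂ := Real.sq_sqrt hC0
  have hCge : c' * s / (r - q) ≤ Real.sqrt C₂ := by
    have h1 : 0 ≤ c' * s / (r - q) := div_nonneg (by positivity) (by linarith)
    calc c' * s / (r - q) = Real.sqrt ((c' * s / (r - q)) ^ 2) := (Real.sqrt_sq h1).symm
      _ ≤ Real.sqrt C₂ := Real.sqrt_le_sqrt (le_max_right _ _)
  have key : c' * s * Real.sqrt C₂ ≤ (r - q) * C₂ := by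
    have hrq : 0 < r - q := by linarith
    have := mul_le_mul_of_nonneg_right hCge (Real.sqrt_nonneg C₂)
    rw [div_mul_eq_mul_div, div_le_iff₀ hrq] at this
    nlinarith [this, hsC2]
  refine ⟨C₂, ?_⟩
  intro n
  induction n with
  | zero =>
    rw [pow_zero, mul_one, hC]
    exact le_max_left _ _
  | succ m ih =>
    have h1 : Δ (m + 1) ≤ q * Δ m + c' * (Real.sqrt q) ^ (m + 1) * Real.sqrt (Δ m) := by
      simpa using hrec (m + 1) (Nat.le_add_left 1 m)
    have hs' : Real.sqrt (Δ m) ≤ Real.sqrt C₂ * s ^ m := by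
      calc Real.sqrt (Δ m) ≤ Real.sqrt (C₂ * r ^ m) := Real.sqrt_le_sqrt ih
        _ = Real.sqrt C₂ * Real.sqrt (r ^ m) := Real.sqrt_mul hC0 _
        _ = Real.sqrt C₂ * s ^ m := by
            rw [← hs2, ← pow_mul, mul_comm 2 m, pow_mul, Real.sqrt_sq (by positivity)]
    have hpow : (Real.sqrt q) ^ (m + 1) ≤ s ^ (m + 1) :=
      pow_le_pow_left₀ hsq0.le hqs _
    have h2 : Δ (m + 1) ≤ q * (C₂ * r ^ m) + c' * s ^ (m + 1) * (Real.sqrt C₂ * s ^ m) := by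
      have t1 : q * Δ m ≤ q * (C₂ * r ^ m) := mul_le_mul_of_nonneg_left ih hq0.le
      have t2 : c' * (Real.sqrt q) ^ (m + 1) * Real.sqrt (Δ m)
          ≤ c' * s ^ (m + 1) * (Real.sqrt C₂ * s ^ m) := by
        apply mul_le_mul
        · exact mul_le_mul_of_nonneg_left hpow hc'
        · exact hs'
        · exact Real.sqrt_nonneg _
        · positivity
      linarith
    have h3 : c' * s ^ (m + 1) * (Real.sqrt C₂ * s ^ m) = (c' * s * Real.sqrt C₂) * r ^ m := by
      have h : s ^ (m + 1) * s ^ m = s * (s ^ 2) ^ m := by ring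
      rw [hs2] at h
      linear_combination (c' * Real.sqrt C₂) * h
    have h4 : (c' * s * Real.sqrt C₂) * r ^ m ≤ ((r - q) * C₂) * r ^ m :=
      mul_le_mul_of_nonneg_right key (by positivity)
    calc Δ (m + 1) ≤ q * (C₂ * r ^ m) + (c' * s * Real.sqrt C₂) * r ^ m := by
          rw [← h3]; exact h2
      _ ≤ q * (C₂ * r ^ m) + ((r - q) * C₂) * r ^ m := by linarith
      _ = C₂ * r ^ (m + 1) := by ring
end

section
/- Let (U,V) be a random vector with density 2·1{0 ≤ u ≤ v ≤ 1} on [0,1]² and let ξ be uniform on [0,1] and independent of (U,V). Set W₀ = K₀(ξ;U,V), W₁ = K₁(ξ;U,V) and D = V − U. Then: (a) under the probability measure conditioned on the event {ξ < U or ξ ≥ V}, the random variable W₀ is uniformly distributed on [0,1] and is independent of D; (b) under the probability measure conditioned on the event {U ≤ ξ < V}, the random variables W₀, W₁ and D are mutually independent, and W₀ and W₁ are each uniformly distributed on [0,1]. -/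
open MeasureTheory ProbabilityTheory Set
open scoped ENNReal

noncomputable section

/-- `K₀(s;u,v)` from the recursive triangulation of the disk. -/
def K0 (s u v : ℝ) : ℝ :=
  if s < u then s / (1 - (v - u))
  else if s < v then u / (1 - (v - u))
  else (s - (v - u)) / (1 - (v - u))

/-- `K₁(s;u,v)` from the recursive triangulation of the disk. -/
def K1 (s u v : ℝ) : ℝ :=
  if u ≤ s ∧ s < v then (s - u) / (v - u) else 0

/-- The law on `[0,1]²` with density `2·1{0 ≤ u ≤ v ≤ 1}` w.r.t. Lebesgue measure. -/
def uvLaw : Measure (ℝ × ℝ) :=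
  volume.withDensity fun p =>
    ENNReal.ofReal (if 0 ≤ p.1 ∧ p.1 ≤ p.2 ∧ p.2 ≤ 1 then 2 else 0)

/-- The uniform law on `[0,1]`. -/
def unifLaw : Measure ℝ := volume.restrict (Set.Icc 0 1)

namespace Stmt5Aux

/-- affine change of variables for volume -/
lemma vol_affine {a : ℝ} (ha : 0 < a) (b : ℝ) (s : Set ℝ) :
    volume ((fun x => (x - b) / a) ⁻¹' s) = ENNReal.ofReal a * volume s := by
  have h : (fun x : ℝ => (x - b) / a) = (fun y => a⁻¹ * y) ∘ (fun x : ℝ => x + (-b)) := by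
    funext x; simp [div_eq_inv_mul]; left; ring
  rw [h, Set.preimage_comp, measure_preimage_add_right,
    Real.volume_preimage_mul_left (inv_ne_zero ha.ne'), inv_inv, abs_of_pos ha]

lemma affine_preimage_Ico {a : ℝ} (ha : 0 < a) (b c d : ℝ) :
    (fun x : ℝ => (x - b) / a) ⁻¹' (Ico c d) = Ico (a * c + b) (a * d + b) := by
  ext x
  simp only [mem_preimage, mem_Ico, le_div_iff₀ ha, div_lt_iff₀ ha]
  constructor <;> rintro ⟨h1, h2⟩ <;> constructor <;> nlinarith

lemma affine_preimage_Icc {a : ℝ} (ha : 0 < a) (b c d : ℝ) :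
    (fun x : ℝ => (x - b) / a) ⁻¹' (Icc c d) = Icc (a * c + b) (a * d + b) := by
  ext x
  simp only [mem_preimage, mem_Icc, le_div_iff₀ ha, div_le_iff₀ ha]
  constructor <;> rintro ⟨h1, h2⟩ <;> constructor <;> nlinarith

end Stmt5Aux

namespace Stmt5Aux

lemma vol_inter_Ico_eq_Icc (t : Set ℝ) :
    volume (t ∩ Ico (0:ℝ) 1) = volume (t ∩ Icc 0 1) := by
  refine le_antisymm (measure_mono (inter_subset_inter_right _ Ico_subset_Icc_self)) ?_
  calc volume (t ∩ Icc 0 1) ≤ volume ((t ∩ Ico 0 1) ∪ {1}) := by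
        refine measure_mono ?_
        rintro x ⟨hx, h0, h1⟩
        rcases lt_or_eq_of_le h1 with h | h
        · exact Or.inl ⟨hx, h0, h⟩
        · exact Or.inr (by simp [h])
    _ ≤ volume (t ∩ Ico 0 1) + volume ({1} : Set ℝ) := measure_union_le _ _
    _ = volume (t ∩ Ico 0 1) := by simp

lemma secA {u v : ℝ} (h0 : 0 ≤ u) (huv : u ≤ v) (h1 : v ≤ 1) (s : Set ℝ)
    (hs : MeasurableSet s) :
    volume {x : ℝ | x ∈ Icc (0:ℝ) 1 ∧ (x < u ∨ v ≤ x) ∧ K0 x u v ∈ s}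
      = ENNReal.ofReal (1 - (v - u)) * volume (s ∩ Icc 0 1) := by
  by_cases hd : v - u < 1
  · have ha : (0:ℝ) < 1 - (v - u) := by linarith
    set a : ℝ := 1 - (v - u) with ha_def
    set c : ℝ := u / a with hc_def
    have hac : a * c = u := by rw [hc_def]; field_simp
    have hc0 : 0 ≤ c := div_nonneg h0 ha.le
    have hc1 : c ≤ 1 := by rw [hc_def, div_le_one ha]; linarith
    have hIco : (fun x : ℝ => (x - 0) / a) ⁻¹' (Ico 0 c) = Ico 0 u := by
      rw [affine_preimage_Ico ha, mul_zero, zero_add, add_zero, hac]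
    have hIcc : (fun x : ℝ => (x - (v - u)) / a) ⁻¹' (Icc c 1) = Icc v 1 := by
      rw [affine_preimage_Icc ha, show a * c + (v - u) = v by rw [hac]; ring,
        show a * 1 + (v - u) = (1:ℝ) by rw [ha_def]; ring]
    have hset : {x : ℝ | x ∈ Icc (0:ℝ) 1 ∧ (x < u ∨ v ≤ x) ∧ K0 x u v ∈ s}
        = (fun x : ℝ => (x - 0) / a) ⁻¹' (s ∩ Ico 0 c)
          ∪ (fun x : ℝ => (x - (v - u)) / a) ⁻¹' (s ∩ Icc c 1) := by
      rw [Set.preimage_inter, Set.preimage_inter, hIco, hIcc]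
      ext x
      simp only [mem_setOf_eq, mem_union, mem_inter_iff, mem_preimage, mem_Ico, mem_Icc]
      constructor
      · rintro ⟨⟨hx0, hx1⟩, hor, hK⟩
        rcases hor with h | h
        · left
          refine ⟨?_, hx0, h⟩
          rwa [K0, if_pos h, ← ha_def, show x / a = (x - 0)/a by ring_nf] at hK
        · right
          refine ⟨?_, h, hx1⟩
          rwa [K0, if_neg (by push_neg; linarith), if_neg (by push_neg; linarith),
            ← ha_def] at hK
      · rintro (⟨hK, hx0, hxu⟩ | ⟨hK, hvx, hx1⟩)
        · exact ⟨⟨hx0, by linarith⟩, Or.inl hxu,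
            by rw [K0, if_pos hxu, ← ha_def, show x / a = (x - 0)/a by ring_nf]; exact hK⟩
        · exact ⟨⟨by linarith, hx1⟩, Or.inr hvx,
            by rw [K0, if_neg (by push_neg; linarith), if_neg (by push_neg; linarith),
              ← ha_def]; exact hK⟩
    rw [hset, measure_union, vol_affine ha, vol_affine ha, ← mul_add, ← measure_union,
      ← Set.inter_union_distrib_left, Ico_union_Icc_eq_Icc hc0 hc1]
    · exact disjoint_left.2 (by rintro x ⟨_, _, hxc⟩ ⟨_, hcx, _⟩; exact absurd hcx (not_le.2 hxc))
    · exact hs.inter measurableSet_Icc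
    · rw [Set.preimage_inter, Set.preimage_inter, hIco, hIcc]
      refine disjoint_left.2 ?_
      rintro x ⟨-, -, hxu⟩ ⟨-, hvx, -⟩
      linarith
    · exact ((measurable_id.sub_const _).div_const _) (hs.inter measurableSet_Icc)
  · have hd1 : v - u = 1 := le_antisymm (by linarith) (not_lt.1 hd)
    have hu : u = 0 := by linarith
    have hv : v = 1 := by linarith
    rw [show ENNReal.ofReal (1 - (v - u)) = 0 by simp [hd1], zero_mul]
    refine measure_mono_null ?_ (Real.volume_singleton (a := (1:ℝ)))
    rintro x ⟨⟨hx0, hx1⟩, hor, -⟩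
    rcases hor with h | h
    · exact absurd (h.trans_le (hu.le.trans hx0)) (lt_irrefl x)
    · exact le_antisymm hx1 (hv ▸ h)

lemma secB1 {u v : ℝ} (h0 : 0 ≤ u) (huv : u ≤ v) (h1 : v ≤ 1) (t : Set ℝ)
    (ht : MeasurableSet t) :
    volume {x : ℝ | x ∈ Icc (0:ℝ) 1 ∧ (u ≤ x ∧ x < v) ∧ K1 x u v ∈ t}
      = ENNReal.ofReal (v - u) * volume (t ∩ Icc 0 1) := by
  by_cases hd : 0 < v - u
  · have hIco : (fun x : ℝ => (x - u) / (v - u)) ⁻¹' (Ico 0 1) = Ico u v := by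
      rw [affine_preimage_Ico hd, mul_zero, zero_add, mul_one]
      congr 1
      ring
    have hset : {x : ℝ | x ∈ Icc (0:ℝ) 1 ∧ (u ≤ x ∧ x < v) ∧ K1 x u v ∈ t}
        = (fun x : ℝ => (x - u) / (v - u)) ⁻¹' (t ∩ Ico 0 1) := by
      rw [Set.preimage_inter, hIco]
      ext x
      simp only [mem_setOf_eq, mem_inter_iff, mem_preimage, mem_Ico, mem_Icc]
      constructor
      · rintro ⟨-, ⟨hux, hxv⟩, hK⟩
        refine ⟨?_, hux, hxv⟩
        rwa [K1, if_pos ⟨hux, hxv⟩] at hK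
      · rintro ⟨hK, hux, hxv⟩
        exact ⟨⟨by linarith, by linarith⟩, ⟨hux, hxv⟩,
          by rw [K1, if_pos ⟨hux, hxv⟩]; exact hK⟩
    rw [hset, vol_affine hd, vol_inter_Ico_eq_Icc]
  · have hd0 : v - u = 0 := le_antisymm (not_lt.1 hd) (by linarith)
    rw [hd0, ENNReal.ofReal_zero, zero_mul]
    refine measure_mono_null ?_ (measure_empty (μ := volume))
    rintro x ⟨-, ⟨hux, hxv⟩, -⟩
    exact absurd (hux.trans_lt hxv) (by rw [show v = u by linarith]; exact lt_irrefl u)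

lemma secB2 {d : ℝ} (hd0 : 0 ≤ d) (s : Set ℝ) (hs : MeasurableSet s) :
    volume {u : ℝ | (0 ≤ u ∧ u + d ≤ 1) ∧ u / (1 - d) ∈ s}
      = ENNReal.ofReal (1 - d) * volume (s ∩ Icc 0 1) := by
  by_cases hd : d < 1
  · have ha : (0:ℝ) < 1 - d := by linarith
    have hIcc : (fun u : ℝ => (u - 0) / (1 - d)) ⁻¹' (Icc 0 1) = Icc 0 (1 - d) := by
      rw [affine_preimage_Icc ha, mul_zero, zero_add, add_zero, mul_one]
    have hset : {u : ℝ | (0 ≤ u ∧ u + d ≤ 1) ∧ u / (1 - d) ∈ s}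
        = (fun u : ℝ => (u - 0) / (1 - d)) ⁻¹' (s ∩ Icc 0 1) := by
      rw [Set.preimage_inter, hIcc]
      ext u
      simp only [mem_setOf_eq, mem_inter_iff, mem_preimage, mem_Icc, sub_zero]
      constructor
      · rintro ⟨⟨hu0, hu1⟩, hK⟩
        exact ⟨hK, hu0, by linarith⟩
      · rintro ⟨hK, hu0, hu1⟩
        exact ⟨⟨hu0, by linarith⟩, hK⟩
    rw [hset, vol_affine ha]
  · rw [show ENNReal.ofReal (1 - d) = 0 by
      simp [ENNReal.ofReal_eq_zero]; linarith, zero_mul]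
    refine measure_mono_null ?_ (Real.volume_singleton (a := (0:ℝ)))
    rintro u ⟨⟨hu0, hu1⟩, -⟩
    have : u = 0 := le_antisymm (by linarith) hu0
    simp [this]

/-- the joint law of `(ξ, U, V)`. -/
def nu : Measure (ℝ × ℝ × ℝ) := unifLaw.prod uvLaw

def dens2 : ℝ × ℝ → ℝ≥0∞ := fun q =>
  ENNReal.ofReal (if 0 ≤ q.1 ∧ q.1 ≤ q.2 ∧ q.2 ≤ 1 then 2 else 0)

def densA : ℝ → ℝ≥0∞ := fun d =>
  if 0 ≤ d ∧ d ≤ 1 then ENNReal.ofReal (2 * (1 - d) * (1 - d)) else 0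

def densB : ℝ → ℝ≥0∞ := fun d =>
  if 0 ≤ d ∧ d ≤ 1 then ENNReal.ofReal (2 * d * (1 - d)) else 0

def rhoA' : Measure ℝ := volume.withDensity densA

def rhoB' : Measure ℝ := volume.withDensity densB

lemma measurable_densA : Measurable densA := by
  unfold densA
  exact Measurable.ite
    ((measurableSet_le measurable_const measurable_id).inter
      (measurableSet_le measurable_id measurable_const))
    (by fun_prop) measurable_const

lemma measurable_densB : Measurable densB := by
  unfold densB
  exact Measurable.ite
    ((measurableSet_le measurable_const measurable_id).inter
      (measurableSet_le measurable_id measurable_const))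
    (by fun_prop) measurable_const

lemma measurable_dens2 : Measurable dens2 := by
  unfold dens2
  refine Measurable.ennreal_ofReal ?_
  exact Measurable.ite
    ((measurableSet_le measurable_const measurable_fst).inter
      ((measurableSet_le measurable_fst measurable_snd).inter
        (measurableSet_le measurable_snd measurable_const)))
    measurable_const measurable_const

lemma measurable_K0' : Measurable (fun p : ℝ × ℝ × ℝ => K0 p.1 p.2.1 p.2.2) := by
  unfold K0
  refine Measurable.ite (measurableSet_lt measurable_fst measurable_snd.fst) (by fun_prop) ?_
  exact Measurable.ite (measurableSet_lt measurable_fst measurable_snd.snd)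
    (by fun_prop) (by fun_prop)

lemma measurable_K1' : Measurable (fun p : ℝ × ℝ × ℝ => K1 p.1 p.2.1 p.2.2) := by
  unfold K1
  refine Measurable.ite ?_ (by fun_prop) measurable_const
  exact (measurableSet_le measurable_snd.fst measurable_fst).inter
    (measurableSet_lt measurable_fst measurable_snd.snd)

instance : IsProbabilityMeasure unifLaw :=
  ⟨by simp [unifLaw, Real.volume_Icc]⟩

instance : IsFiniteMeasure uvLaw := by
  constructor
  rw [show uvLaw = volume.withDensity dens2 from rfl,
    withDensity_apply _ MeasurableSet.univ, setLIntegral_univ]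
  have hb : ∀ q : ℝ × ℝ, dens2 q ≤ (Icc (0:ℝ) 1 ×ˢ Icc (0:ℝ) 1).indicator
      (fun _ => (2 : ℝ≥0∞)) q := by
    intro q
    unfold dens2
    by_cases hq : 0 ≤ q.1 ∧ q.1 ≤ q.2 ∧ q.2 ≤ 1
    · rw [if_pos hq, indicator_of_mem]
      · simp [ENNReal.ofReal_ofNat]
      · exact ⟨⟨hq.1, hq.2.1.trans hq.2.2⟩, hq.1.trans hq.2.1, hq.2.2⟩
    · rw [if_neg hq]; simp
  calc ∫⁻ q, dens2 q ≤ ∫⁻ q, (Icc (0:ℝ) 1 ×ˢ Icc (0:ℝ) 1).indicator (fun _ => (2:ℝ≥0∞)) q :=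
        lintegral_mono hb
    _ = 2 * volume (Icc (0:ℝ) 1 ×ˢ Icc (0:ℝ) 1) :=
        lintegral_indicator_const (measurableSet_Icc.prod measurableSet_Icc) 2
    _ < ⊤ := by
        rw [Measure.volume_eq_prod, Measure.prod_prod, Real.volume_Icc]
        norm_num

lemma indicator_one_ne_top {t : Set ℝ} {d : ℝ} :
    t.indicator (fun _ => (1:ℝ≥0∞)) d ≠ ⊤ := by
  by_cases h : d ∈ t <;> simp [h]

lemma vol_inter_Icc_ne_top (s : Set ℝ) : volume (s ∩ Icc (0:ℝ) 1) ≠ ⊤ := by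
  have h1 : volume (s ∩ Icc (0:ℝ) 1) ≤ 1 := by
    have : volume (Icc (0:ℝ) 1) = 1 := by simp [Real.volume_Icc]
    rw [← this]
    exact measure_mono inter_subset_right
  exact (h1.trans_lt ENNReal.one_lt_top).ne

lemma keyA {s t : Set ℝ} (hs : MeasurableSet s) (ht : MeasurableSet t) :
    nu {p : ℝ × ℝ × ℝ | (p.1 < p.2.1 ∨ p.2.2 ≤ p.1) ∧ K0 p.1 p.2.1 p.2.2 ∈ s
        ∧ p.2.2 - p.2.1 ∈ t}
      = volume (s ∩ Icc 0 1) * rhoA' t := by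
  set E : Set (ℝ × ℝ × ℝ) := {p | (p.1 < p.2.1 ∨ p.2.2 ≤ p.1) ∧ K0 p.1 p.2.1 p.2.2 ∈ s
      ∧ p.2.2 - p.2.1 ∈ t} with hE_def
  have hE : MeasurableSet E := by
    refine MeasurableSet.inter ?_ (MeasurableSet.inter ?_ ?_)
    · exact (measurableSet_lt measurable_fst measurable_snd.fst).union
        (measurableSet_le measurable_snd.snd measurable_fst)
    · exact measurable_K0' hs
    · exact (measurable_snd.snd.sub measurable_snd.fst) ht
  have hsec_meas' : ∀ q : ℝ × ℝ, MeasurableSet ((fun x : ℝ => (x, q)) ⁻¹' E) :=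
    fun q => hE.preimage (measurable_id.prodMk measurable_const)
  have hsec_meas : Measurable fun q : ℝ × ℝ => unifLaw ((fun x : ℝ => (x, q)) ⁻¹' E) :=
    measurable_measure_prodMk_left (hE.preimage measurable_swap)
  have step1 : nu E = ∫⁻ q, dens2 q * unifLaw ((fun x : ℝ => (x, q)) ⁻¹' E)
      ∂(volume : Measure (ℝ × ℝ)) := by
    rw [nu, Measure.prod_apply_symm hE, show uvLaw = volume.withDensity dens2 from rfl,
      lintegral_withDensity_eq_lintegral_mul volume measurable_dens2 hsec_meas]
    rfl
  have hpt : ∀ q : ℝ × ℝ, dens2 q * unifLaw ((fun x : ℝ => (x, q)) ⁻¹' E)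
      = (dens2 q * ENNReal.ofReal (1 - (q.2 - q.1))
          * t.indicator (fun _ => (1:ℝ≥0∞)) (q.2 - q.1)) * volume (s ∩ Icc 0 1) := by
    intro q
    by_cases hq : 0 ≤ q.1 ∧ q.1 ≤ q.2 ∧ q.2 ≤ 1
    · rw [unifLaw, Measure.restrict_apply (hsec_meas' q)]
      by_cases hqt : q.2 - q.1 ∈ t
      · have hsec : (fun x : ℝ => (x, q)) ⁻¹' E ∩ Icc 0 1
            = {x : ℝ | x ∈ Icc (0:ℝ) 1 ∧ (x < q.1 ∨ q.2 ≤ x) ∧ K0 x q.1 q.2 ∈ s} := by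
          ext x
          simp only [hE_def, mem_inter_iff, mem_preimage, mem_setOf_eq]
          tauto
        rw [hsec, secA hq.1 hq.2.1 hq.2.2 s hs, indicator_of_mem hqt]
        ring
      · have hsec : (fun x : ℝ => (x, q)) ⁻¹' E ∩ Icc 0 1 = (∅ : Set ℝ) := by
          ext x
          simp only [hE_def, mem_inter_iff, mem_preimage, mem_setOf_eq,
            mem_empty_iff_false, iff_false]
          tauto
        rw [hsec, indicator_of_notMem hqt]
        simp
    · have h0 : dens2 q = 0 := by simp only [dens2]; rw [if_neg hq]; simp
      rw [h0, zero_mul, zero_mul, zero_mul, zero_mul]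
  have hGmeas : Measurable (fun q : ℝ × ℝ => dens2 q * ENNReal.ofReal (1 - (q.2 - q.1))
      * t.indicator (fun _ => (1:ℝ≥0∞)) (q.2 - q.1)) := by
    refine ((measurable_dens2.mul ?_).mul ?_)
    · exact (measurable_const.sub (measurable_snd.sub measurable_fst)).ennreal_ofReal
    · exact (measurable_const.indicator ht).comp (measurable_snd.sub measurable_fst)
  have hG2meas : Measurable (fun z : ℝ × ℝ =>
      ENNReal.ofReal (if 0 ≤ z.1 ∧ 0 ≤ z.2 ∧ z.1 + z.2 ≤ 1 then 2 else 0)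
        * ENNReal.ofReal (1 - z.2) * t.indicator (fun _ => (1:ℝ≥0∞)) z.2) := by
    refine ((?_ : Measurable fun z : ℝ × ℝ =>
      ENNReal.ofReal (if 0 ≤ z.1 ∧ 0 ≤ z.2 ∧ z.1 + z.2 ≤ 1 then 2 else 0)).mul ?_).mul ?_
    · refine Measurable.ennreal_ofReal (Measurable.ite ?_ measurable_const measurable_const)
      exact (measurableSet_le measurable_const measurable_fst).inter
        ((measurableSet_le measurable_const measurable_snd).inter
          (measurableSet_le (measurable_fst.add measurable_snd) measurable_const))
    · exact (measurable_const.sub measurable_snd).ennreal_ofReal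
    · exact (measurable_const.indicator ht).comp measurable_snd
  have hGint : ∫⁻ q, dens2 q * ENNReal.ofReal (1 - (q.2 - q.1))
      * t.indicator (fun _ => (1:ℝ≥0∞)) (q.2 - q.1) ∂(volume : Measure (ℝ × ℝ))
      = rhoA' t := by
    rw [Measure.volume_eq_prod, lintegral_prod _ hGmeas.aemeasurable]
    have stepT : ∀ u : ℝ, (∫⁻ v, dens2 (u, v) * ENNReal.ofReal (1 - ((u, v).2 - (u, v).1))
        * t.indicator (fun _ => (1:ℝ≥0∞)) ((u, v).2 - (u, v).1) ∂volume)
        = ∫⁻ d, ENNReal.ofReal (if 0 ≤ u ∧ 0 ≤ d ∧ u + d ≤ 1 then 2 else 0)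
            * ENNReal.ofReal (1 - d) * t.indicator (fun _ => (1:ℝ≥0∞)) d ∂volume := by
      intro u
      have hfm : Measurable (fun v : ℝ => dens2 (u, v)
          * ENNReal.ofReal (1 - ((u, v).2 - (u, v).1))
          * t.indicator (fun _ => (1:ℝ≥0∞)) ((u, v).2 - (u, v).1)) :=
        hGmeas.comp measurable_prodMk_left
      rw [← (measurePreserving_add_right volume u).lintegral_comp hfm]
      refine lintegral_congr fun d => ?_
      show dens2 (u, d + u) * ENNReal.ofReal (1 - (d + u - u))
          * t.indicator (fun _ => (1:ℝ≥0∞)) (d + u - u) = _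
      have hd' : d + u - u = d := by ring
      have hcond : (0 ≤ u ∧ u ≤ d + u ∧ d + u ≤ 1) = (0 ≤ u ∧ 0 ≤ d ∧ u + d ≤ 1) := by
        refine propext ?_
        constructor <;> rintro ⟨a, b, c⟩ <;> exact ⟨a, by linarith, by linarith⟩
      simp only [dens2, hd']
      simp only [hcond]
    rw [lintegral_congr stepT,
      lintegral_lintegral_swap hG2meas.aemeasurable]
    have stepU : ∀ d : ℝ, (∫⁻ u, ENNReal.ofReal (if 0 ≤ u ∧ 0 ≤ d ∧ u + d ≤ 1 then 2 else 0)
        * ENNReal.ofReal (1 - d) * t.indicator (fun _ => (1:ℝ≥0∞)) d ∂volume)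
        = densA d * t.indicator (fun _ => (1:ℝ≥0∞)) d := by
      intro d
      by_cases hd : 0 ≤ d
      · have hfun : ∀ u : ℝ, ENNReal.ofReal (if 0 ≤ u ∧ 0 ≤ d ∧ u + d ≤ 1 then 2 else 0)
            = (Icc (0:ℝ) (1 - d)).indicator (fun _ => ENNReal.ofReal 2) u := by
          intro u
          by_cases hu : 0 ≤ u ∧ u + d ≤ 1
          · rw [if_pos ⟨hu.1, hd, hu.2⟩,
              indicator_of_mem (mem_Icc.2 ⟨hu.1, by linarith [hu.2]⟩)]
          · rw [if_neg (by tauto), indicator_of_notMem (by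
              rw [mem_Icc]; rintro ⟨h1, h2⟩; exact hu ⟨h1, by linarith⟩)]
            simp
        calc (∫⁻ u, ENNReal.ofReal (if 0 ≤ u ∧ 0 ≤ d ∧ u + d ≤ 1 then 2 else 0)
              * ENNReal.ofReal (1 - d) * t.indicator (fun _ => (1:ℝ≥0∞)) d ∂volume)
            = (∫⁻ u, (Icc (0:ℝ) (1 - d)).indicator (fun _ => ENNReal.ofReal 2) u
                * (ENNReal.ofReal (1 - d) * t.indicator (fun _ => (1:ℝ≥0∞)) d) ∂volume) := by
              refine lintegral_congr fun u => ?_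
              rw [hfun u, mul_assoc]
          _ = (∫⁻ u, (Icc (0:ℝ) (1 - d)).indicator (fun _ => ENNReal.ofReal 2) u ∂volume)
                * (ENNReal.ofReal (1 - d) * t.indicator (fun _ => (1:ℝ≥0∞)) d) :=
              lintegral_mul_const' _ _
                (ENNReal.mul_ne_top ENNReal.ofReal_ne_top indicator_one_ne_top)
          _ = ENNReal.ofReal 2 * ENNReal.ofReal (1 - d)
                * (ENNReal.ofReal (1 - d) * t.indicator (fun _ => (1:ℝ≥0∞)) d) := by
              rw [lintegral_indicator_const measurableSet_Icc, Real.volume_Icc, sub_zero]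
          _ = densA d * t.indicator (fun _ => (1:ℝ≥0∞)) d := by
              by_cases hd1 : d ≤ 1
              · rw [densA, if_pos ⟨hd, hd1⟩]
                rw [show ENNReal.ofReal 2 * ENNReal.ofReal (1 - d)
                    * (ENNReal.ofReal (1 - d) * t.indicator (fun _ => (1:ℝ≥0∞)) d)
                    = (ENNReal.ofReal 2 * ENNReal.ofReal (1 - d) * ENNReal.ofReal (1 - d))
                      * t.indicator (fun _ => (1:ℝ≥0∞)) d by ring]
                congr 1
                rw [← ENNReal.ofReal_mul (by norm_num), ← ENNReal.ofReal_mul (by nlinarith)]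
              · rw [densA, if_neg (by tauto),
                  ENNReal.ofReal_of_nonpos (by linarith : (1:ℝ) - d ≤ 0)]
                simp
      · have hzero : ∀ u : ℝ, ENNReal.ofReal (if 0 ≤ u ∧ 0 ≤ d ∧ u + d ≤ 1 then 2 else 0)
            * ENNReal.ofReal (1 - d) * t.indicator (fun _ => (1:ℝ≥0∞)) d = 0 := by
          intro u
          rw [if_neg (by tauto)]
          simp
        rw [lintegral_congr hzero, lintegral_zero, densA, if_neg (by tauto), zero_mul]
    rw [lintegral_congr stepU, rhoA', withDensity_apply _ ht, ← lintegral_indicator ht]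
    refine lintegral_congr fun d => ?_
    by_cases h : d ∈ t
    · simp [h]
    · simp [h]
  rw [step1, lintegral_congr hpt, lintegral_mul_const' _ _ (vol_inter_Icc_ne_top s),
    hGint, mul_comm]

lemma keyB {s t r : Set ℝ} (hs : MeasurableSet s) (ht : MeasurableSet t)
    (hr : MeasurableSet r) :
    nu {p : ℝ × ℝ × ℝ | (p.2.1 ≤ p.1 ∧ p.1 < p.2.2) ∧ K0 p.1 p.2.1 p.2.2 ∈ s
        ∧ K1 p.1 p.2.1 p.2.2 ∈ t ∧ p.2.2 - p.2.1 ∈ r}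
      = volume (s ∩ Icc 0 1) * (volume (t ∩ Icc 0 1) * rhoB' r) := by
  set E : Set (ℝ × ℝ × ℝ) := {p | (p.2.1 ≤ p.1 ∧ p.1 < p.2.2) ∧ K0 p.1 p.2.1 p.2.2 ∈ s
      ∧ K1 p.1 p.2.1 p.2.2 ∈ t ∧ p.2.2 - p.2.1 ∈ r} with hE_def
  have hE : MeasurableSet E := by
    refine MeasurableSet.inter ?_ (MeasurableSet.inter ?_ (MeasurableSet.inter ?_ ?_))
    · exact (measurableSet_le measurable_snd.fst measurable_fst).inter
        (measurableSet_lt measurable_fst measurable_snd.snd)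
    · exact measurable_K0' hs
    · exact measurable_K1' ht
    · exact (measurable_snd.snd.sub measurable_snd.fst) hr
  have hsec_meas' : ∀ q : ℝ × ℝ, MeasurableSet ((fun x : ℝ => (x, q)) ⁻¹' E) :=
    fun q => hE.preimage (measurable_id.prodMk measurable_const)
  have hsec_meas : Measurable fun q : ℝ × ℝ => unifLaw ((fun x : ℝ => (x, q)) ⁻¹' E) :=
    measurable_measure_prodMk_left (hE.preimage measurable_swap)
  have step1 : nu E = ∫⁻ q, dens2 q * unifLaw ((fun x : ℝ => (x, q)) ⁻¹' E)
      ∂(volume : Measure (ℝ × ℝ)) := by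
    rw [nu, Measure.prod_apply_symm hE, show uvLaw = volume.withDensity dens2 from rfl,
      lintegral_withDensity_eq_lintegral_mul volume measurable_dens2 hsec_meas]
    rfl
  have hpt : ∀ q : ℝ × ℝ, dens2 q * unifLaw ((fun x : ℝ => (x, q)) ⁻¹' E)
      = (dens2 q * s.indicator (fun _ => (1:ℝ≥0∞)) (q.1 / (1 - (q.2 - q.1)))
          * r.indicator (fun _ => (1:ℝ≥0∞)) (q.2 - q.1)
          * ENNReal.ofReal (q.2 - q.1)) * volume (t ∩ Icc 0 1) := by
    intro q
    by_cases hq : 0 ≤ q.1 ∧ q.1 ≤ q.2 ∧ q.2 ≤ 1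
    · rw [unifLaw, Measure.restrict_apply (hsec_meas' q)]
      have hK0val : ∀ x : ℝ, q.1 ≤ x → x < q.2 → K0 x q.1 q.2 = q.1 / (1 - (q.2 - q.1)) := by
        intro x h1 h2
        rw [K0, if_neg (not_lt.2 h1), if_pos h2]
      by_cases hqr : q.2 - q.1 ∈ r
      · by_cases hqs : q.1 / (1 - (q.2 - q.1)) ∈ s
        · have hsec : (fun x : ℝ => (x, q)) ⁻¹' E ∩ Icc 0 1
              = {x : ℝ | x ∈ Icc (0:ℝ) 1 ∧ (q.1 ≤ x ∧ x < q.2) ∧ K1 x q.1 q.2 ∈ t} := by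
            ext x
            simp only [hE_def, mem_inter_iff, mem_preimage, mem_setOf_eq]
            constructor
            · rintro ⟨⟨⟨h1, h2⟩, -, hK1, -⟩, hI⟩
              exact ⟨hI, ⟨h1, h2⟩, hK1⟩
            · rintro ⟨hI, ⟨h1, h2⟩, hK1⟩
              exact ⟨⟨⟨h1, h2⟩, (hK0val x h1 h2) ▸ hqs, hK1, hqr⟩, hI⟩
          rw [hsec, secB1 hq.1 hq.2.1 hq.2.2 t ht, indicator_of_mem hqs,
            indicator_of_mem hqr]
          ring
        · have hsec : (fun x : ℝ => (x, q)) ⁻¹' E ∩ Icc 0 1 = (∅ : Set ℝ) := by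
            ext x
            simp only [hE_def, mem_inter_iff, mem_preimage, mem_setOf_eq,
              mem_empty_iff_false, iff_false]
            rintro ⟨⟨⟨h1, h2⟩, hK0, -, -⟩, -⟩
            exact hqs ((hK0val x h1 h2) ▸ hK0)
          rw [hsec, indicator_of_notMem hqs]
          simp
      · have hsec : (fun x : ℝ => (x, q)) ⁻¹' E ∩ Icc 0 1 = (∅ : Set ℝ) := by
          ext x
          simp only [hE_def, mem_inter_iff, mem_preimage, mem_setOf_eq,
            mem_empty_iff_false, iff_false]
          rintro ⟨⟨-, -, -, h⟩, -⟩
          exact hqr h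
        rw [hsec, indicator_of_notMem hqr]
        simp
    · have h0 : dens2 q = 0 := by simp only [dens2]; rw [if_neg hq]; simp
      rw [h0, zero_mul, zero_mul, zero_mul, zero_mul, zero_mul]
  have hGmeas : Measurable (fun q : ℝ × ℝ =>
      dens2 q * s.indicator (fun _ => (1:ℝ≥0∞)) (q.1 / (1 - (q.2 - q.1)))
        * r.indicator (fun _ => (1:ℝ≥0∞)) (q.2 - q.1) * ENNReal.ofReal (q.2 - q.1)) := by
    refine ((measurable_dens2.mul ?_).mul ?_).mul ?_
    · exact (measurable_const.indicator hs).comp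
        (measurable_fst.div (measurable_const.sub (measurable_snd.sub measurable_fst)))
    · exact (measurable_const.indicator hr).comp (measurable_snd.sub measurable_fst)
    · exact (measurable_snd.sub measurable_fst).ennreal_ofReal
  have hG2meas : Measurable (fun z : ℝ × ℝ =>
      ENNReal.ofReal (if 0 ≤ z.1 ∧ 0 ≤ z.2 ∧ z.1 + z.2 ≤ 1 then 2 else 0)
        * s.indicator (fun _ => (1:ℝ≥0∞)) (z.1 / (1 - z.2))
        * r.indicator (fun _ => (1:ℝ≥0∞)) z.2 * ENNReal.ofReal z.2) := by
    refine ((Measurable.mul ?_ ?_).mul ?_).mul ?_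
    · refine Measurable.ennreal_ofReal (Measurable.ite ?_ measurable_const measurable_const)
      exact (measurableSet_le measurable_const measurable_fst).inter
        ((measurableSet_le measurable_const measurable_snd).inter
          (measurableSet_le (measurable_fst.add measurable_snd) measurable_const))
    · exact (measurable_const.indicator hs).comp
        (measurable_fst.div (measurable_const.sub measurable_snd))
    · exact (measurable_const.indicator hr).comp measurable_snd
    · exact measurable_snd.ennreal_ofReal
  have hGint : ∫⁻ q, dens2 q * s.indicator (fun _ => (1:ℝ≥0∞)) (q.1 / (1 - (q.2 - q.1)))
      * r.indicator (fun _ => (1:ℝ≥0∞)) (q.2 - q.1) * ENNReal.ofReal (q.2 - q.1)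
      ∂(volume : Measure (ℝ × ℝ))
      = rhoB' r * volume (s ∩ Icc 0 1) := by
    rw [Measure.volume_eq_prod, lintegral_prod _ hGmeas.aemeasurable]
    have stepT : ∀ u : ℝ, (∫⁻ v, dens2 (u, v)
        * s.indicator (fun _ => (1:ℝ≥0∞)) ((u, v).1 / (1 - ((u, v).2 - (u, v).1)))
        * r.indicator (fun _ => (1:ℝ≥0∞)) ((u, v).2 - (u, v).1)
        * ENNReal.ofReal ((u, v).2 - (u, v).1) ∂volume)
        = ∫⁻ d, ENNReal.ofReal (if 0 ≤ u ∧ 0 ≤ d ∧ u + d ≤ 1 then 2 else 0)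
            * s.indicator (fun _ => (1:ℝ≥0∞)) (u / (1 - d))
            * r.indicator (fun _ => (1:ℝ≥0∞)) d * ENNReal.ofReal d ∂volume := by
      intro u
      have hfm : Measurable (fun v : ℝ => dens2 (u, v)
          * s.indicator (fun _ => (1:ℝ≥0∞)) ((u, v).1 / (1 - ((u, v).2 - (u, v).1)))
          * r.indicator (fun _ => (1:ℝ≥0∞)) ((u, v).2 - (u, v).1)
          * ENNReal.ofReal ((u, v).2 - (u, v).1)) :=
        hGmeas.comp measurable_prodMk_left
      rw [← (measurePreserving_add_right volume u).lintegral_comp hfm]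
      refine lintegral_congr fun d => ?_
      show dens2 (u, d + u) * s.indicator _ ((u, d + u).1 / (1 - ((u, d + u).2 - (u, d + u).1)))
          * r.indicator _ ((u, d + u).2 - (u, d + u).1)
          * ENNReal.ofReal ((u, d + u).2 - (u, d + u).1) = _
      have hd' : d + u - u = d := by ring
      have hcond : (0 ≤ u ∧ u ≤ d + u ∧ d + u ≤ 1) = (0 ≤ u ∧ 0 ≤ d ∧ u + d ≤ 1) := by
        refine propext ?_
        constructor <;> rintro ⟨a, b, c⟩ <;> exact ⟨a, by linarith, by linarith⟩
      simp only [dens2, hd']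
      simp only [hcond]
    rw [lintegral_congr stepT, lintegral_lintegral_swap hG2meas.aemeasurable]
    have stepU : ∀ d : ℝ, (∫⁻ u, ENNReal.ofReal (if 0 ≤ u ∧ 0 ≤ d ∧ u + d ≤ 1 then 2 else 0)
        * s.indicator (fun _ => (1:ℝ≥0∞)) (u / (1 - d))
        * r.indicator (fun _ => (1:ℝ≥0∞)) d * ENNReal.ofReal d ∂volume)
        = (densB d * r.indicator (fun _ => (1:ℝ≥0∞)) d) * volume (s ∩ Icc 0 1) := by
      intro d
      by_cases hd : 0 ≤ d
      · have hW : MeasurableSet {u : ℝ | (0 ≤ u ∧ u + d ≤ 1) ∧ u / (1 - d) ∈ s} := by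
          refine MeasurableSet.inter ?_ ?_
          · exact (measurableSet_le measurable_const measurable_id).inter
              (measurableSet_le (measurable_id.add_const d) measurable_const)
          · exact (measurable_id.div_const (1 - d)) hs
        have hfun : ∀ u : ℝ, ENNReal.ofReal (if 0 ≤ u ∧ 0 ≤ d ∧ u + d ≤ 1 then 2 else 0)
            * s.indicator (fun _ => (1:ℝ≥0∞)) (u / (1 - d))
            = ({u : ℝ | (0 ≤ u ∧ u + d ≤ 1) ∧ u / (1 - d) ∈ s}).indicator
                (fun _ => ENNReal.ofReal 2) u := by
          intro u
          by_cases hu : 0 ≤ u ∧ u + d ≤ 1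
          · by_cases hus : u / (1 - d) ∈ s
            · rw [if_pos ⟨hu.1, hd, hu.2⟩, indicator_of_mem hus,
                indicator_of_mem (show u ∈ {u : ℝ | (0 ≤ u ∧ u + d ≤ 1) ∧ u / (1 - d) ∈ s}
                  from ⟨hu, hus⟩), mul_one]
            · have hnm : u ∉ {u : ℝ | (0 ≤ u ∧ u + d ≤ 1) ∧ u / (1 - d) ∈ s} := by
                intro h
                rw [mem_setOf_eq] at h
                exact hus h.2
              rw [indicator_of_notMem hus, indicator_of_notMem hnm, mul_zero]
          · have hnm : u ∉ {u : ℝ | (0 ≤ u ∧ u + d ≤ 1) ∧ u / (1 - d) ∈ s} := by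
              intro h
              rw [mem_setOf_eq] at h
              exact hu h.1
            rw [if_neg (by tauto), indicator_of_notMem hnm]
            simp
        calc (∫⁻ u, ENNReal.ofReal (if 0 ≤ u ∧ 0 ≤ d ∧ u + d ≤ 1 then 2 else 0)
              * s.indicator (fun _ => (1:ℝ≥0∞)) (u / (1 - d))
              * r.indicator (fun _ => (1:ℝ≥0∞)) d * ENNReal.ofReal d ∂volume)
            = (∫⁻ u, ({u : ℝ | (0 ≤ u ∧ u + d ≤ 1) ∧ u / (1 - d) ∈ s}).indicator
                (fun _ => ENNReal.ofReal 2) u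
                * (r.indicator (fun _ => (1:ℝ≥0∞)) d * ENNReal.ofReal d) ∂volume) := by
              refine lintegral_congr fun u => ?_
              rw [← hfun u]
              ring
          _ = (∫⁻ u, ({u : ℝ | (0 ≤ u ∧ u + d ≤ 1) ∧ u / (1 - d) ∈ s}).indicator
                (fun _ => ENNReal.ofReal 2) u ∂volume)
                * (r.indicator (fun _ => (1:ℝ≥0∞)) d * ENNReal.ofReal d) :=
              lintegral_mul_const' _ _
                (ENNReal.mul_ne_top indicator_one_ne_top ENNReal.ofReal_ne_top)
          _ = ENNReal.ofReal 2 * (ENNReal.ofReal (1 - d) * volume (s ∩ Icc 0 1))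
                * (r.indicator (fun _ => (1:ℝ≥0∞)) d * ENNReal.ofReal d) := by
              rw [lintegral_indicator_const hW, secB2 hd s hs]
          _ = (densB d * r.indicator (fun _ => (1:ℝ≥0∞)) d) * volume (s ∩ Icc 0 1) := by
              by_cases hd1 : d ≤ 1
              · rw [densB, if_pos ⟨hd, hd1⟩]
                rw [show ENNReal.ofReal 2 * (ENNReal.ofReal (1 - d) * volume (s ∩ Icc 0 1))
                    * (r.indicator (fun _ => (1:ℝ≥0∞)) d * ENNReal.ofReal d)
                    = (ENNReal.ofReal 2 * ENNReal.ofReal d * ENNReal.ofReal (1 - d))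
                      * r.indicator (fun _ => (1:ℝ≥0∞)) d * volume (s ∩ Icc 0 1) by ring]
                congr 2
                rw [← ENNReal.ofReal_mul (by norm_num), ← ENNReal.ofReal_mul (by nlinarith)]
              · rw [densB, if_neg (by tauto),
                  ENNReal.ofReal_of_nonpos (by linarith : (1:ℝ) - d ≤ 0)]
                simp
      · have hzero : ∀ u : ℝ, ENNReal.ofReal (if 0 ≤ u ∧ 0 ≤ d ∧ u + d ≤ 1 then 2 else 0)
            * s.indicator (fun _ => (1:ℝ≥0∞)) (u / (1 - d))
            * r.indicator (fun _ => (1:ℝ≥0∞)) d * ENNReal.ofReal d = 0 := by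
          intro u
          rw [if_neg (by tauto)]
          simp
        rw [lintegral_congr hzero, lintegral_zero, densB, if_neg (by tauto), zero_mul,
          zero_mul]
    rw [lintegral_congr stepU,
      lintegral_mul_const' _ _ (vol_inter_Icc_ne_top s)]
    congr 1
    rw [rhoB', withDensity_apply _ hr, ← lintegral_indicator hr]
    refine lintegral_congr fun d => ?_
    by_cases h : d ∈ r
    · simp [h]
    · simp [h]
  rw [step1, lintegral_congr hpt, lintegral_mul_const' _ _ (vol_inter_Icc_ne_top t),
    hGint]
  ring

lemma rhoA'_univ_bounds : rhoA' univ ≠ 0 ∧ rhoA' univ ≠ ⊤ := by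
  have happ : rhoA' univ = ∫⁻ d, densA d := by
    rw [rhoA', withDensity_apply _ MeasurableSet.univ, setLIntegral_univ]
  constructor
  · have hlow : ∀ d : ℝ, (Icc (0:ℝ) (1/2)).indicator (fun _ => ENNReal.ofReal (1/2)) d
        ≤ densA d := by
      intro d
      by_cases h : d ∈ Icc (0:ℝ) (1/2)
      · rw [indicator_of_mem h, densA, mem_Icc] at *
        rw [if_pos ⟨h.1, by linarith [h.2]⟩]
        exact ENNReal.ofReal_le_ofReal (by nlinarith [h.1, h.2])
      · rw [indicator_of_notMem h]
        exact zero_le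
    have : ENNReal.ofReal (1/2) * ENNReal.ofReal (1/2) ≤ rhoA' univ := by
      rw [happ]
      calc ENNReal.ofReal (1/2) * ENNReal.ofReal (1/2)
          = ENNReal.ofReal (1/2) * volume (Icc (0:ℝ) (1/2)) := by
              rw [Real.volume_Icc]
              norm_num
        _ = ∫⁻ d, (Icc (0:ℝ) (1/2)).indicator (fun _ => ENNReal.ofReal (1/2)) d :=
              (lintegral_indicator_const measurableSet_Icc _).symm
        _ ≤ _ := lintegral_mono hlow
    intro h0
    rw [h0, nonpos_iff_eq_zero, mul_eq_zero, or_self, ENNReal.ofReal_eq_zero] at this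
    linarith
  · have hup : ∀ d : ℝ, densA d ≤ (Icc (0:ℝ) 1).indicator (fun _ => (2:ℝ≥0∞)) d := by
      intro d
      by_cases h : d ∈ Icc (0:ℝ) 1
      · rw [indicator_of_mem h, densA, mem_Icc] at *
        rw [if_pos h]
        calc ENNReal.ofReal (2 * (1 - d) * (1 - d)) ≤ ENNReal.ofReal 2 :=
              ENNReal.ofReal_le_ofReal (by nlinarith [h.1, h.2])
          _ = 2 := by simp [ENNReal.ofReal_ofNat]
      · rw [indicator_of_notMem h, densA, if_neg (by rw [mem_Icc] at h; tauto)]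
    refine ne_top_of_le_ne_top ?_ ((happ ▸ lintegral_mono hup : rhoA' univ ≤ _))
    rw [lintegral_indicator_const measurableSet_Icc, Real.volume_Icc]
    simp

lemma rhoB'_univ_bounds : rhoB' univ ≠ 0 ∧ rhoB' univ ≠ ⊤ := by
  have happ : rhoB' univ = ∫⁻ d, densB d := by
    rw [rhoB', withDensity_apply _ MeasurableSet.univ, setLIntegral_univ]
  constructor
  · have hlow : ∀ d : ℝ, (Icc (1/4:ℝ) (1/2)).indicator (fun _ => ENNReal.ofReal (1/4)) d
        ≤ densB d := by
      intro d
      by_cases h : d ∈ Icc (1/4:ℝ) (1/2)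
      · rw [indicator_of_mem h, densB, mem_Icc] at *
        rw [if_pos ⟨by linarith [h.1], by linarith [h.2]⟩]
        exact ENNReal.ofReal_le_ofReal (by nlinarith [h.1, h.2])
      · rw [indicator_of_notMem h]
        exact zero_le
    have : ENNReal.ofReal (1/4) * ENNReal.ofReal (1/4) ≤ rhoB' univ := by
      rw [happ]
      calc ENNReal.ofReal (1/4) * ENNReal.ofReal (1/4)
          = ENNReal.ofReal (1/4) * volume (Icc (1/4:ℝ) (1/2)) := by
              rw [Real.volume_Icc]
              norm_num
        _ = ∫⁻ d, (Icc (1/4:ℝ) (1/2)).indicator (fun _ => ENNReal.ofReal (1/4)) d :=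
              (lintegral_indicator_const measurableSet_Icc _).symm
        _ ≤ _ := lintegral_mono hlow
    intro h0
    rw [h0, nonpos_iff_eq_zero, mul_eq_zero, or_self, ENNReal.ofReal_eq_zero] at this
    linarith
  · have hup : ∀ d : ℝ, densB d ≤ (Icc (0:ℝ) 1).indicator (fun _ => (2:ℝ≥0∞)) d := by
      intro d
      by_cases h : d ∈ Icc (0:ℝ) 1
      · rw [indicator_of_mem h, densB, mem_Icc] at *
        rw [if_pos h]
        calc ENNReal.ofReal (2 * d * (1 - d)) ≤ ENNReal.ofReal 2 :=
              ENNReal.ofReal_le_ofReal (by nlinarith [h.1, h.2])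
          _ = 2 := by simp [ENNReal.ofReal_ofNat]
      · rw [indicator_of_notMem h, densB, if_neg (by rw [mem_Icc] at h; tauto)]
    refine ne_top_of_le_ne_top ?_ ((happ ▸ lintegral_mono hup : rhoB' univ ≤ _))
    rw [lintegral_indicator_const measurableSet_Icc, Real.volume_Icc]
    simp

lemma ext_prod {α β : Type*} [MeasurableSpace α] [MeasurableSpace β]
    {μ ν : Measure (α × β)} [IsFiniteMeasure μ] [IsFiniteMeasure ν]
    (h : ∀ s t, MeasurableSet s → MeasurableSet t → μ (s ×ˢ t) = ν (s ×ˢ t)) : μ = ν := by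
  refine ext_of_generate_finite _ generateFrom_prod.symm isPiSystem_prod ?_ ?_
  · rintro _ ⟨s, hs, t, ht, rfl⟩
    exact h s t hs ht
  · rw [← univ_prod_univ]
    exact h univ univ MeasurableSet.univ MeasurableSet.univ

lemma restrict_snd_apply (κ : Measure (ℝ × ℝ × ℝ)) {s : Set ℝ} (F : Set (ℝ × ℝ))
    (hF : MeasurableSet F) :
    (κ.restrict (s ×ˢ (univ : Set (ℝ × ℝ)))).map Prod.snd F = κ (s ×ˢ F) := by
  rw [Measure.map_apply measurable_snd hF,
    Measure.restrict_apply (hF.preimage measurable_snd)]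
  congr 1
  ext p
  simp only [mem_inter_iff, mem_preimage, mem_prod, mem_univ, and_true]
  tauto

lemma ext_prod3 {μ ν : Measure (ℝ × ℝ × ℝ)} [IsFiniteMeasure μ] [IsFiniteMeasure ν]
    (h : ∀ s t r, MeasurableSet s → MeasurableSet t → MeasurableSet r →
      μ (s ×ˢ t ×ˢ r) = ν (s ×ˢ t ×ˢ r)) : μ = ν := by
  refine ext_prod ?_
  intro s E hs hE
  haveI : IsFiniteMeasure ((μ.restrict (s ×ˢ (univ : Set (ℝ × ℝ)))).map Prod.snd) := by
    constructor
    rw [restrict_snd_apply μ univ MeasurableSet.univ]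
    exact (measure_mono (subset_univ _)).trans_lt (measure_lt_top μ univ)
  haveI : IsFiniteMeasure ((ν.restrict (s ×ˢ (univ : Set (ℝ × ℝ)))).map Prod.snd) := by
    constructor
    rw [restrict_snd_apply ν univ MeasurableSet.univ]
    exact (measure_mono (subset_univ _)).trans_lt (measure_lt_top ν univ)
  have h2 : (μ.restrict (s ×ˢ (univ : Set (ℝ × ℝ)))).map Prod.snd
      = (ν.restrict (s ×ˢ (univ : Set (ℝ × ℝ)))).map Prod.snd := by
    refine ext_prod ?_
    intro t r ht hr
    rw [restrict_snd_apply μ _ (ht.prod hr), restrict_snd_apply ν _ (ht.prod hr)]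
    exact h s t r hs ht hr
  rw [← restrict_snd_apply μ E hE, ← restrict_snd_apply ν E hE, h2]

def A' : Set (ℝ × ℝ × ℝ) := {p | p.1 < p.2.1 ∨ p.2.2 ≤ p.1}

def B' : Set (ℝ × ℝ × ℝ) := {p | p.2.1 ≤ p.1 ∧ p.1 < p.2.2}

lemma measurableSet_A' : MeasurableSet A' :=
  (measurableSet_lt measurable_fst measurable_snd.fst).union
    (measurableSet_le measurable_snd.snd measurable_fst)

lemma measurableSet_B' : MeasurableSet B' :=
  (measurableSet_le measurable_snd.fst measurable_fst).inter
    (measurableSet_lt measurable_fst measurable_snd.snd)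

instance : IsFiniteMeasure nu := by rw [nu]; infer_instance

lemma nu_A' : nu A' = rhoA' univ := by
  have h := keyA (s := univ) (t := univ) MeasurableSet.univ MeasurableSet.univ
  rw [show {p : ℝ × ℝ × ℝ | (p.1 < p.2.1 ∨ p.2.2 ≤ p.1) ∧ K0 p.1 p.2.1 p.2.2 ∈ univ
      ∧ p.2.2 - p.2.1 ∈ univ} = A' by ext p; simp [A']] at h
  rw [h, univ_inter, Real.volume_Icc]
  simp

lemma nu_B' : nu B' = rhoB' univ := by
  have h := keyB (s := univ) (t := univ) (r := univ) MeasurableSet.univ MeasurableSet.univ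
    MeasurableSet.univ
  rw [show {p : ℝ × ℝ × ℝ | (p.2.1 ≤ p.1 ∧ p.1 < p.2.2) ∧ K0 p.1 p.2.1 p.2.2 ∈ univ
      ∧ K1 p.1 p.2.1 p.2.2 ∈ univ ∧ p.2.2 - p.2.1 ∈ univ} = B' by ext p; simp [B']] at h
  rw [h, univ_inter, Real.volume_Icc]
  simp

def rhoA : Measure ℝ := (rhoA' univ)⁻¹ • rhoA'

def rhoB : Measure ℝ := (rhoB' univ)⁻¹ • rhoB'

instance : IsProbabilityMeasure rhoA := ⟨by
  rw [rhoA, Measure.smul_apply, smul_eq_mul,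
    ENNReal.inv_mul_cancel rhoA'_univ_bounds.1 rhoA'_univ_bounds.2]⟩

instance : IsProbabilityMeasure rhoB := ⟨by
  rw [rhoB, Measure.smul_apply, smul_eq_mul,
    ENNReal.inv_mul_cancel rhoB'_univ_bounds.1 rhoB'_univ_bounds.2]⟩

lemma nu_A'_ne_zero : nu A' ≠ 0 := by rw [nu_A']; exact rhoA'_univ_bounds.1

lemma nu_B'_ne_zero : nu B' ≠ 0 := by rw [nu_B']; exact rhoB'_univ_bounds.1

lemma measurable_pairA : Measurable (fun p : ℝ × ℝ × ℝ =>
    (K0 p.1 p.2.1 p.2.2, p.2.2 - p.2.1)) :=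
  measurable_K0'.prodMk (measurable_snd.snd.sub measurable_snd.fst)

lemma measurable_tripleB : Measurable (fun p : ℝ × ℝ × ℝ =>
    (K0 p.1 p.2.1 p.2.2, K1 p.1 p.2.1 p.2.2, p.2.2 - p.2.1)) :=
  measurable_K0'.prodMk (measurable_K1'.prodMk
    (measurable_snd.snd.sub measurable_snd.fst))

lemma condA_law : (nu[|A']).map (fun p : ℝ × ℝ × ℝ => (K0 p.1 p.2.1 p.2.2, p.2.2 - p.2.1))
    = unifLaw.prod rhoA := by
  haveI := cond_isProbabilityMeasure (μ := nu) nu_A'_ne_zero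
  haveI : IsProbabilityMeasure ((nu[|A']).map (fun p : ℝ × ℝ × ℝ =>
      (K0 p.1 p.2.1 p.2.2, p.2.2 - p.2.1))) :=
    Measure.isProbabilityMeasure_map measurable_pairA.aemeasurable
  refine ext_prod ?_
  intro s t hs ht
  rw [Measure.map_apply measurable_pairA (hs.prod ht), cond_apply measurableSet_A' nu]
  have hset : A' ∩ (fun p : ℝ × ℝ × ℝ => (K0 p.1 p.2.1 p.2.2, p.2.2 - p.2.1)) ⁻¹' (s ×ˢ t)
      = {p : ℝ × ℝ × ℝ | (p.1 < p.2.1 ∨ p.2.2 ≤ p.1) ∧ K0 p.1 p.2.1 p.2.2 ∈ s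
          ∧ p.2.2 - p.2.1 ∈ t} := by
    ext p
    simp only [A', mem_inter_iff, mem_preimage, mem_prod, mem_setOf_eq]
    try tauto
  rw [hset, keyA hs ht, nu_A', Measure.prod_prod,
    show unifLaw s = volume (s ∩ Icc 0 1) from Measure.restrict_apply hs,
    rhoA, Measure.smul_apply, smul_eq_mul, mul_left_comm]

lemma condB_law : (nu[|B']).map (fun p : ℝ × ℝ × ℝ =>
      (K0 p.1 p.2.1 p.2.2, K1 p.1 p.2.1 p.2.2, p.2.2 - p.2.1))
    = unifLaw.prod (unifLaw.prod rhoB) := by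
  haveI := cond_isProbabilityMeasure (μ := nu) nu_B'_ne_zero
  haveI : IsProbabilityMeasure ((nu[|B']).map (fun p : ℝ × ℝ × ℝ =>
      (K0 p.1 p.2.1 p.2.2, K1 p.1 p.2.1 p.2.2, p.2.2 - p.2.1))) :=
    Measure.isProbabilityMeasure_map measurable_tripleB.aemeasurable
  refine ext_prod3 ?_
  intro s t r hs ht hr
  rw [Measure.map_apply measurable_tripleB (hs.prod (ht.prod hr)),
    cond_apply measurableSet_B' nu]
  have hset : B' ∩ (fun p : ℝ × ℝ × ℝ =>
        (K0 p.1 p.2.1 p.2.2, K1 p.1 p.2.1 p.2.2, p.2.2 - p.2.1)) ⁻¹' (s ×ˢ t ×ˢ r)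
      = {p : ℝ × ℝ × ℝ | (p.2.1 ≤ p.1 ∧ p.1 < p.2.2) ∧ K0 p.1 p.2.1 p.2.2 ∈ s
          ∧ K1 p.1 p.2.1 p.2.2 ∈ t ∧ p.2.2 - p.2.1 ∈ r} := by
    ext p
    simp only [B', mem_inter_iff, mem_preimage, mem_prod, mem_setOf_eq]
    try tauto
  rw [hset, keyB hs ht hr, nu_B', Measure.prod_prod, Measure.prod_prod,
    show unifLaw s = volume (s ∩ Icc 0 1) from Measure.restrict_apply hs,
    show unifLaw t = volume (t ∩ Icc 0 1) from Measure.restrict_apply ht,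
    rhoB, Measure.smul_apply, smul_eq_mul, mul_left_comm ((rhoB' univ)⁻¹),
    mul_left_comm ((rhoB' univ)⁻¹)]

lemma condA_margK0 : (nu[|A']).map (fun p : ℝ × ℝ × ℝ => K0 p.1 p.2.1 p.2.2) = unifLaw := by
  have h := congrArg (Measure.map Prod.fst) condA_law
  rw [Measure.map_map measurable_fst measurable_pairA, Measure.map_fst_prod,
    measure_univ, one_smul] at h
  exact h

lemma condA_margD : (nu[|A']).map (fun p : ℝ × ℝ × ℝ => p.2.2 - p.2.1) = rhoA := by
  have h := congrArg (Measure.map Prod.snd) condA_law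
  rw [Measure.map_map measurable_snd measurable_pairA, Measure.map_snd_prod,
    measure_univ, one_smul] at h
  exact h

lemma condB_margK0 : (nu[|B']).map (fun p : ℝ × ℝ × ℝ => K0 p.1 p.2.1 p.2.2) = unifLaw := by
  have h := congrArg (Measure.map Prod.fst) condB_law
  rw [Measure.map_map measurable_fst measurable_tripleB, Measure.map_fst_prod,
    measure_univ, one_smul] at h
  exact h

lemma condB_law2 : (nu[|B']).map (fun p : ℝ × ℝ × ℝ => (K1 p.1 p.2.1 p.2.2, p.2.2 - p.2.1))
    = unifLaw.prod rhoB := by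
  have h := congrArg (Measure.map Prod.snd) condB_law
  rw [Measure.map_map measurable_snd measurable_tripleB, Measure.map_snd_prod,
    measure_univ, one_smul] at h
  exact h

lemma measurable_pairB : Measurable (fun p : ℝ × ℝ × ℝ =>
    (K1 p.1 p.2.1 p.2.2, p.2.2 - p.2.1)) :=
  measurable_K1'.prodMk (measurable_snd.snd.sub measurable_snd.fst)

lemma condB_margK1 : (nu[|B']).map (fun p : ℝ × ℝ × ℝ => K1 p.1 p.2.1 p.2.2) = unifLaw := by
  have h := congrArg (Measure.map Prod.fst) condB_law2
  rw [Measure.map_map measurable_fst measurable_pairB, Measure.map_fst_prod,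
    measure_univ, one_smul] at h
  exact h

lemma condB_margD : (nu[|B']).map (fun p : ℝ × ℝ × ℝ => p.2.2 - p.2.1) = rhoB := by
  have h := congrArg (Measure.map Prod.snd) condB_law2
  rw [Measure.map_map measurable_snd measurable_pairB, Measure.map_snd_prod,
    measure_univ, one_smul] at h
  exact h

lemma map_cond_comp {Ω α β : Type*} [MeasurableSpace Ω] [MeasurableSpace α]
    [MeasurableSpace β] (μ : Measure Ω) (T : Ω → α) (hT : Measurable T) {A : Set α}
    (hA : MeasurableSet A) {g : α → β} (hg : Measurable g) :
    (μ[|T ⁻¹' A]).map (fun ω => g (T ω)) = ((μ.map T)[|A]).map g := by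
  show ((μ (T ⁻¹' A))⁻¹ • μ.restrict (T ⁻¹' A)).map (fun ω => g (T ω))
      = ((μ.map T A)⁻¹ • (μ.map T).restrict A).map g
  rw [Measure.restrict_map hT hA, Measure.map_apply hT hA, Measure.map_smul,
    Measure.map_smul, Measure.map_map hg hT]
  rfl

end Stmt5Aux

open Stmt5Aux in
/-- with `W₀ = K₀(ξ;U,V)`, `W₁ = K1(ξ;U,V)`, `D = V−U`. -/
theorem stmt_5 {Ω : Type*} [MeasurableSpace Ω] (μ : Measure Ω) [IsProbabilityMeasure μ]
    (UV : Ω → ℝ × ℝ) (hUVmeas : Measurable UV) (hUVlaw : μ.map UV = uvLaw)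
    (ξ : Ω → ℝ) (hξmeas : Measurable ξ) (hξlaw : μ.map ξ = unifLaw)
    (hindep : IndepFun ξ UV μ) :
    -- (a)
    ((μ[|{ω | ξ ω < (UV ω).1 ∨ (UV ω).2 ≤ ξ ω}]).map
        (fun ω => K0 (ξ ω) (UV ω).1 (UV ω).2) = unifLaw ∧
      IndepFun (fun ω => K0 (ξ ω) (UV ω).1 (UV ω).2)
        (fun ω => (UV ω).2 - (UV ω).1)
        (μ[|{ω | ξ ω < (UV ω).1 ∨ (UV ω).2 ≤ ξ ω}])) ∧
    -- (b)
    ((μ[|{ω | (UV ω).1 ≤ ξ ω ∧ ξ ω < (UV ω).2}]).map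
        (fun ω => K0 (ξ ω) (UV ω).1 (UV ω).2) = unifLaw ∧
      (μ[|{ω | (UV ω).1 ≤ ξ ω ∧ ξ ω < (UV ω).2}]).map
        (fun ω => K1 (ξ ω) (UV ω).1 (UV ω).2) = unifLaw ∧
      iIndepFun
        (![fun ω => K0 (ξ ω) (UV ω).1 (UV ω).2,
           fun ω => K1 (ξ ω) (UV ω).1 (UV ω).2,
           fun ω => (UV ω).2 - (UV ω).1])
        (μ[|{ω | (UV ω).1 ≤ ξ ω ∧ ξ ω < (UV ω).2}])) := by
  classical
  have hTmeas : Measurable (fun ω => (ξ ω, UV ω)) := hξmeas.prodMk hUVmeas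
  have hTlaw : μ.map (fun ω => (ξ ω, UV ω)) = nu := by
    rw [nu, ← hξlaw, ← hUVlaw]
    exact (indepFun_iff_map_prod_eq_prod_map_map hξmeas.aemeasurable
      hUVmeas.aemeasurable).1 hindep
  have hApre : {ω | ξ ω < (UV ω).1 ∨ (UV ω).2 ≤ ξ ω}
      = (fun ω => (ξ ω, UV ω)) ⁻¹' A' := rfl
  have hBpre : {ω | (UV ω).1 ≤ ξ ω ∧ ξ ω < (UV ω).2}
      = (fun ω => (ξ ω, UV ω)) ⁻¹' B' := rfl
  haveI hPA : IsProbabilityMeasure (μ[|(fun ω => (ξ ω, UV ω)) ⁻¹' A']) := by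
    apply cond_isProbabilityMeasure
    rw [← Measure.map_apply hTmeas measurableSet_A', hTlaw]
    exact nu_A'_ne_zero
  haveI hPB : IsProbabilityMeasure (μ[|(fun ω => (ξ ω, UV ω)) ⁻¹' B']) := by
    apply cond_isProbabilityMeasure
    rw [← Measure.map_apply hTmeas measurableSet_B', hTlaw]
    exact nu_B'_ne_zero
  have hcondA : ∀ {β : Type} [MeasurableSpace β] (g : ℝ × ℝ × ℝ → β), Measurable g →
      (μ[|(fun ω => (ξ ω, UV ω)) ⁻¹' A']).map (fun ω => g (ξ ω, UV ω)) = (nu[|A']).map g := by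
    intro β _ g hg
    rw [map_cond_comp μ _ hTmeas measurableSet_A' hg, hTlaw]
  have hcondB : ∀ {β : Type} [MeasurableSpace β] (g : ℝ × ℝ × ℝ → β), Measurable g →
      (μ[|(fun ω => (ξ ω, UV ω)) ⁻¹' B']).map (fun ω => g (ξ ω, UV ω)) = (nu[|B']).map g := by
    intro β _ g hg
    rw [map_cond_comp μ _ hTmeas measurableSet_B' hg, hTlaw]
  have hW0meas : Measurable (fun ω => K0 (ξ ω) (UV ω).1 (UV ω).2) :=
    measurable_K0'.comp hTmeas
  have hW1meas : Measurable (fun ω => K1 (ξ ω) (UV ω).1 (UV ω).2) :=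
    measurable_K1'.comp hTmeas
  have hDmeas : Measurable (fun ω => (UV ω).2 - (UV ω).1) :=
    hUVmeas.snd.sub hUVmeas.fst
  -- part (a)
  have ha1 : (μ[|(fun ω => (ξ ω, UV ω)) ⁻¹' A']).map
      (fun ω => K0 (ξ ω) (UV ω).1 (UV ω).2) = unifLaw :=
    (hcondA _ measurable_K0').trans condA_margK0
  have haD : (μ[|(fun ω => (ξ ω, UV ω)) ⁻¹' A']).map
      (fun ω => (UV ω).2 - (UV ω).1) = rhoA :=
    (hcondA _ (measurable_snd.snd.sub measurable_snd.fst)).trans condA_margD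
  have haJ : (μ[|(fun ω => (ξ ω, UV ω)) ⁻¹' A']).map
      (fun ω => (K0 (ξ ω) (UV ω).1 (UV ω).2, (UV ω).2 - (UV ω).1)) = unifLaw.prod rhoA :=
    (hcondA _ measurable_pairA).trans condA_law
  -- part (b) marginals and joint
  have hb1 : (μ[|(fun ω => (ξ ω, UV ω)) ⁻¹' B']).map
      (fun ω => K0 (ξ ω) (UV ω).1 (UV ω).2) = unifLaw :=
    (hcondB _ measurable_K0').trans condB_margK0
  have hb2 : (μ[|(fun ω => (ξ ω, UV ω)) ⁻¹' B']).map
      (fun ω => K1 (ξ ω) (UV ω).1 (UV ω).2) = unifLaw :=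
    (hcondB _ measurable_K1').trans condB_margK1
  have hbD : (μ[|(fun ω => (ξ ω, UV ω)) ⁻¹' B']).map
      (fun ω => (UV ω).2 - (UV ω).1) = rhoB :=
    (hcondB _ (measurable_snd.snd.sub measurable_snd.fst)).trans condB_margD
  have hbJ : (μ[|(fun ω => (ξ ω, UV ω)) ⁻¹' B']).map
      (fun ω => (K0 (ξ ω) (UV ω).1 (UV ω).2, K1 (ξ ω) (UV ω).1 (UV ω).2,
        (UV ω).2 - (UV ω).1)) = unifLaw.prod (unifLaw.prod rhoB) :=
    (hcondB _ measurable_tripleB).trans condB_law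
  refine ⟨⟨by rw [hApre]; exact ha1, ?_⟩, by rw [hBpre]; exact hb1,
    by rw [hBpre]; exact hb2, ?_⟩
  · -- independence in part (a)
    rw [hApre]
    refine (indepFun_iff_map_prod_eq_prod_map_map hW0meas.aemeasurable
      hDmeas.aemeasurable).2 ?_
    rw [ha1, haD]
    exact haJ
  · -- mutual independence in part (b)
    rw [hBpre]
    set μB := μ[|(fun ω => (ξ ω, UV ω)) ⁻¹' B'] with hμB_def
    rw [iIndepFun_iff_measure_inter_preimage_eq_mul]
    intro S sets hsets
    set sets' : Fin 3 → Set ℝ := fun i => if i ∈ S then sets i else univ with hsets'_def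
    have hsets'm : ∀ i, MeasurableSet (sets' i) := by
      intro i
      by_cases h : i ∈ S
      · simp only [hsets'_def, if_pos h]; exact hsets i h
      · simp only [hsets'_def, if_neg h]; exact MeasurableSet.univ
    have hval0 : μB ((![fun ω => K0 (ξ ω) (UV ω).1 (UV ω).2,
        fun ω => K1 (ξ ω) (UV ω).1 (UV ω).2,
        fun ω => (UV ω).2 - (UV ω).1]) 0 ⁻¹' sets' 0) = unifLaw (sets' 0) := by
      rw [show (![fun ω => K0 (ξ ω) (UV ω).1 (UV ω).2,
        fun ω => K1 (ξ ω) (UV ω).1 (UV ω).2,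
        fun ω => (UV ω).2 - (UV ω).1]) 0 = fun ω => K0 (ξ ω) (UV ω).1 (UV ω).2 from rfl,
        ← Measure.map_apply hW0meas (hsets'm 0), hb1]
    have hval1 : μB ((![fun ω => K0 (ξ ω) (UV ω).1 (UV ω).2,
        fun ω => K1 (ξ ω) (UV ω).1 (UV ω).2,
        fun ω => (UV ω).2 - (UV ω).1]) 1 ⁻¹' sets' 1) = unifLaw (sets' 1) := by
      rw [show (![fun ω => K0 (ξ ω) (UV ω).1 (UV ω).2,
        fun ω => K1 (ξ ω) (UV ω).1 (UV ω).2,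
        fun ω => (UV ω).2 - (UV ω).1]) 1 = fun ω => K1 (ξ ω) (UV ω).1 (UV ω).2 from rfl,
        ← Measure.map_apply hW1meas (hsets'm 1), hb2]
    have hval2 : μB ((![fun ω => K0 (ξ ω) (UV ω).1 (UV ω).2,
        fun ω => K1 (ξ ω) (UV ω).1 (UV ω).2,
        fun ω => (UV ω).2 - (UV ω).1]) 2 ⁻¹' sets' 2) = rhoB (sets' 2) := by
      rw [show (![fun ω => K0 (ξ ω) (UV ω).1 (UV ω).2,
        fun ω => K1 (ξ ω) (UV ω).1 (UV ω).2,
        fun ω => (UV ω).2 - (UV ω).1]) 2 = fun ω => (UV ω).2 - (UV ω).1 from rfl,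
        ← Measure.map_apply hDmeas (hsets'm 2), hbD]
    have hIntEq : (⋂ i ∈ S, (![fun ω => K0 (ξ ω) (UV ω).1 (UV ω).2,
        fun ω => K1 (ξ ω) (UV ω).1 (UV ω).2,
        fun ω => (UV ω).2 - (UV ω).1]) i ⁻¹' sets i)
        = ⋂ i, (![fun ω => K0 (ξ ω) (UV ω).1 (UV ω).2,
        fun ω => K1 (ξ ω) (UV ω).1 (UV ω).2,
        fun ω => (UV ω).2 - (UV ω).1]) i ⁻¹' sets' i := by
      ext ω
      simp only [mem_iInter, mem_preimage, hsets'_def]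
      constructor
      · intro h i
        by_cases hi : i ∈ S
        · simpa [hi] using h i hi
        · simp [hi]
      · intro h i hi
        have := h i
        simpa [hi] using this
    have hseteq : (⋂ i, (![fun ω => K0 (ξ ω) (UV ω).1 (UV ω).2,
        fun ω => K1 (ξ ω) (UV ω).1 (UV ω).2,
        fun ω => (UV ω).2 - (UV ω).1]) i ⁻¹' sets' i)
        = (fun ω => (K0 (ξ ω) (UV ω).1 (UV ω).2, K1 (ξ ω) (UV ω).1 (UV ω).2,
            (UV ω).2 - (UV ω).1)) ⁻¹' (sets' 0 ×ˢ sets' 1 ×ˢ sets' 2) := by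
      ext ω
      simp only [mem_iInter, mem_preimage, mem_prod]
      constructor
      · intro h
        exact ⟨h 0, h 1, h 2⟩
      · intro h i
        fin_cases i
        · exact h.1
        · exact h.2.1
        · exact h.2.2
    have htripleMeas : Measurable (fun ω => (K0 (ξ ω) (UV ω).1 (UV ω).2,
        K1 (ξ ω) (UV ω).1 (UV ω).2, (UV ω).2 - (UV ω).1)) :=
      measurable_tripleB.comp hTmeas
    rw [hIntEq, hseteq, ← Measure.map_apply htripleMeas
      ((hsets'm 0).prod ((hsets'm 1).prod (hsets'm 2))), hbJ,
      Measure.prod_prod, Measure.prod_prod]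
    rw [show (∏ i ∈ S, μB ((![fun ω => K0 (ξ ω) (UV ω).1 (UV ω).2,
        fun ω => K1 (ξ ω) (UV ω).1 (UV ω).2,
        fun ω => (UV ω).2 - (UV ω).1]) i ⁻¹' sets i))
        = ∏ i, μB ((![fun ω => K0 (ξ ω) (UV ω).1 (UV ω).2,
        fun ω => K1 (ξ ω) (UV ω).1 (UV ω).2,
        fun ω => (UV ω).2 - (UV ω).1]) i ⁻¹' sets' i) from ?_]
    · rw [Fin.prod_univ_three, hval0, hval1, hval2, mul_assoc]
    · rw [← Fintype.prod_ite_mem S]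
      refine Finset.prod_congr rfl fun i _ => ?_
      by_cases hi : i ∈ S
      · simp only [hsets'_def, if_pos hi]
      · simp only [hsets'_def, if_neg hi, preimage_univ, measure_univ]

end
end

section
/- Let μ : ℕ → ℝ satisfy μ(n) = 1/3 + (4/(3n))·Σ_{k=1}^{n−1} μ(k) for all n ≥ 1 (with the empty sum equal to 0 for n = 1). Then for every n ≥ 1, μ(n) = Γ(n + 4/3)/(Γ(4/3)·n!) − 1; moreover there exists a constant C such that |μ(n) − ( n^{1/3}/Γ(4/3) − 1 )| ≤ C·n^{−2/3} for all n ≥ 1. -/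
open scoped Nat

noncomputable def auxP : ℕ → ℝ := fun n => ∏ k ∈ Finset.Icc 1 n, (1 + 1/(3*(k:ℝ)))

lemma auxP_zero : auxP 0 = 1 := by simp [auxP]

lemma auxP_succ (n : ℕ) : auxP (n+1) = auxP n * (1 + 1/(3*((n:ℝ)+1))) := by
  rw [auxP, auxP, Finset.prod_Icc_succ_top (Nat.le_add_left 1 n)]
  push_cast
  ring

lemma auxP_pos (n : ℕ) : 0 < auxP n := by
  apply Finset.prod_pos
  intro k _
  positivity

lemma auxP_gamma (n : ℕ) :
    Real.Gamma ((n:ℝ) + 4/3) = Real.Gamma (4/3) * (n ! : ℝ) * auxP n := by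
  induction n with
  | zero => simp [auxP_zero]
  | succ n ih =>
    have h0 : (n:ℝ) + 4/3 ≠ 0 := by positivity
    have h1 : ((n+1:ℕ):ℝ) + 4/3 = ((n:ℝ) + 4/3) + 1 := by push_cast; ring
    rw [h1, Real.Gamma_add_one h0, ih, auxP_succ]
    have h2 : (3:ℝ)*((n:ℝ)+1) ≠ 0 := by positivity
    push_cast [Nat.factorial_succ]
    field_simp
    ring

lemma auxP_sum (m : ℕ) :
    ∑ k ∈ Finset.Icc 1 m, auxP k = (3*((m:ℝ)+1)*auxP (m+1) - 4)/4 := by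
  induction m with
  | zero => simp [auxP_succ, auxP_zero]; norm_num
  | succ m ih =>
    rw [Finset.sum_Icc_succ_top (Nat.le_add_left 1 m), ih, auxP_succ (m+1)]
    have h2 : (3:ℝ)*(((m:ℕ):ℝ)+1+1) ≠ 0 := by positivity
    push_cast
    field_simp
    ring

lemma mu_eq_auxP (μ : ℕ → ℝ)
    (hrec : ∀ n : ℕ, 1 ≤ n →
      μ n = 1/3 + (4 / (3 * (n : ℝ))) * ∑ k ∈ Finset.Ico 1 n, μ k) :
    ∀ n : ℕ, 1 ≤ n → μ n = auxP n - 1 := by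
  intro n
  induction n using Nat.strong_induction_on with
  | _ n ih =>
    intro hn
    obtain ⟨m, rfl⟩ := Nat.exists_eq_add_of_le' hn
    rw [hrec _ hn, show Finset.Ico 1 (m+1) = Finset.Icc 1 m from Finset.Ico_add_one_right_eq_Icc 1 m]
    have hsum : ∑ k ∈ Finset.Icc 1 m, μ k = ∑ k ∈ Finset.Icc 1 m, (auxP k - 1) := by
      refine Finset.sum_congr rfl fun k hk => ?_
      have hk' := Finset.mem_Icc.mp hk
      exact ih k (Nat.lt_succ_of_le hk'.2) hk'.1
    rw [hsum, Finset.sum_sub_distrib, auxP_sum m]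
    simp only [Finset.sum_const, Nat.card_Icc, Nat.add_sub_cancel, nsmul_eq_mul, mul_one]
    have hm : (3:ℝ) * (((m+1:ℕ):ℝ)) ≠ 0 := by positivity
    push_cast
    field_simp
    ring

lemma gamma_convex_bound {x y a b : ℝ} (hx : 0 < x) (hy : 0 < y)
    (ha : 0 ≤ a) (hb : 0 ≤ b) (hab : a + b = 1) :
    Real.Gamma (a*x + b*y) ≤ Real.Gamma x ^ a * Real.Gamma y ^ b := by
  have h := Real.convexOn_log_Gamma.2 (Set.mem_Ioi.mpr hx) (Set.mem_Ioi.mpr hy) ha hb hab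
  simp only [Function.comp_apply, smul_eq_mul] at h
  have hz : 0 < a*x + b*y := by
    rcases lt_or_ge 0 a with h' | h'
    · nlinarith [mul_pos h' hx, mul_nonneg hb hy.le]
    · have ha0 : a = 0 := le_antisymm h' ha
      have hb1 : b = 1 := by linarith
      rw [ha0, hb1]; simpa using hy
  calc Real.Gamma (a*x+b*y)
      = Real.exp (Real.log (Real.Gamma (a*x+b*y))) :=
        (Real.exp_log (Real.Gamma_pos_of_pos hz)).symm
    _ ≤ Real.exp (a * Real.log (Real.Gamma x) + b * Real.log (Real.Gamma y)) :=
        Real.exp_le_exp.2 h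
    _ = Real.Gamma x ^ a * Real.Gamma y ^ b := by
        rw [Real.exp_add, Real.rpow_def_of_pos (Real.Gamma_pos_of_pos hx),
          Real.rpow_def_of_pos (Real.Gamma_pos_of_pos hy), mul_comm a, mul_comm b]

lemma gautschi_upper (t : ℝ) (ht : 0 ≤ t) :
    Real.Gamma (t + 4/3) ≤ Real.Gamma (t+1) * (t+1) ^ ((1:ℝ)/3) := by
  have h1 : (0:ℝ) < t + 1 := by linarith
  have h2 : (0:ℝ) < t + 2 := by linarith
  have h := gamma_convex_bound (x := t+1) (y := t+2) (a := 2/3) (b := 1/3)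
    h1 h2 (by norm_num) (by norm_num) (by norm_num)
  have he : (2/3:ℝ)*(t+1) + (1/3)*(t+2) = t + 4/3 := by ring
  rw [he] at h
  have hG : Real.Gamma (t+2) = (t+1) * Real.Gamma (t+1) := by
    rw [show t+2 = (t+1)+1 by ring, Real.Gamma_add_one h1.ne']
  rw [hG] at h
  have hGp : 0 < Real.Gamma (t+1) := Real.Gamma_pos_of_pos h1
  calc Real.Gamma (t + 4/3)
      ≤ Real.Gamma (t+1) ^ ((2:ℝ)/3) * ((t+1) * Real.Gamma (t+1)) ^ ((1:ℝ)/3) := h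
    _ = (Real.Gamma (t+1) ^ ((2:ℝ)/3) * Real.Gamma (t+1) ^ ((1:ℝ)/3)) * (t+1) ^ ((1:ℝ)/3) := by
        rw [Real.mul_rpow h1.le hGp.le]; ring
    _ = Real.Gamma (t+1) * (t+1) ^ ((1:ℝ)/3) := by
        rw [← Real.rpow_add hGp]; norm_num

lemma gautschi_lower (t : ℝ) (ht : 0 ≤ t) :
    Real.Gamma (t+1) * t ^ ((1:ℝ)/3) ≤ Real.Gamma (t + 4/3) := by
  have h1 : (0:ℝ) < t + 1/3 := by linarith
  have h2 : (0:ℝ) < t + 4/3 := by linarith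
  have h := gamma_convex_bound (x := t+1/3) (y := t+4/3) (a := 1/3) (b := 2/3)
    h1 h2 (by norm_num) (by norm_num) (by norm_num)
  have he : (1/3:ℝ)*(t+1/3) + (2/3)*(t+4/3) = t + 1 := by ring
  rw [he] at h
  have hG : Real.Gamma (t+4/3) = (t+1/3) * Real.Gamma (t+1/3) := by
    rw [show t+4/3 = (t+1/3)+1 by ring, Real.Gamma_add_one h1.ne']
  have hGp : 0 < Real.Gamma (t+1/3) := Real.Gamma_pos_of_pos h1
  have hGp2 : 0 < Real.Gamma (t+4/3) := Real.Gamma_pos_of_pos h2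
  have hstep : Real.Gamma (t+1) * (t+1/3) ^ ((1:ℝ)/3) ≤ Real.Gamma (t+4/3) := by
    have hG' : Real.Gamma (t+1/3) = Real.Gamma (t+4/3) / (t+1/3) := by
      rw [hG]; field_simp
    rw [hG'] at h
    have hcalc : (Real.Gamma (t+4/3) / (t+1/3)) ^ ((1:ℝ)/3) * Real.Gamma (t+4/3) ^ ((2:ℝ)/3)
        = Real.Gamma (t+4/3) / (t+1/3) ^ ((1:ℝ)/3) := by
      rw [Real.div_rpow hGp2.le h1.le, div_mul_eq_mul_div, ← Real.rpow_add hGp2]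
      norm_num
    rw [hcalc] at h
    have hp : 0 < (t+1/3) ^ ((1:ℝ)/3) := Real.rpow_pos_of_pos h1 _
    rw [← le_div_iff₀ hp]
    exact h
  refine le_trans ?_ hstep
  have hmono : t ^ ((1:ℝ)/3) ≤ (t+1/3) ^ ((1:ℝ)/3) :=
    Real.rpow_le_rpow ht (by linarith) (by norm_num)
  have hGp3 : 0 < Real.Gamma (t+1) := Real.Gamma_pos_of_pos (by linarith)
  exact mul_le_mul_of_nonneg_left hmono hGp3.le

lemma cube_diff (t : ℝ) (ht : 1 ≤ t) :
    (t+1) ^ ((1:ℝ)/3) - t ^ ((1:ℝ)/3) ≤ (1/3) * t ^ (-(2:ℝ)/3) := by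
  have ht0 : (0:ℝ) < t := by linarith
  set a := (t+1) ^ ((1:ℝ)/3) with hadef
  set b := t ^ ((1:ℝ)/3) with hbdef
  have hb : 0 < b := Real.rpow_pos_of_pos ht0 _
  have ha : 0 < a := Real.rpow_pos_of_pos (by linarith) _
  have hab : b ≤ a := Real.rpow_le_rpow ht0.le (by linarith) (by norm_num)
  have ha3 : a^3 = t+1 := by
    rw [hadef, ← Real.rpow_natCast ((t+1) ^ ((1:ℝ)/3)) 3,
      ← Real.rpow_mul (by linarith : (0:ℝ) ≤ t+1)]
    norm_num
  have hb3 : b^3 = t := by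
    rw [hbdef, ← Real.rpow_natCast (t ^ ((1:ℝ)/3)) 3, ← Real.rpow_mul ht0.le]
    norm_num
  have hb2 : b^2 = t ^ ((2:ℝ)/3) := by
    rw [hbdef, ← Real.rpow_natCast (t ^ ((1:ℝ)/3)) 2, ← Real.rpow_mul ht0.le]
    norm_num
  have key : (a - b) * (3*b^2) ≤ 1 := by
    nlinarith [mul_nonneg (sq_nonneg (a-b)) (show (0:ℝ) ≤ a + 2*b by linarith)]
  have h2 : t ^ (-(2:ℝ)/3) = 1 / t ^ ((2:ℝ)/3) := by
    rw [show -(2:ℝ)/3 = -((2:ℝ)/3) by ring, Real.rpow_neg ht0.le, one_div]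
  rw [h2, ← hb2]
  have h3 : (0:ℝ) < 3*b^2 := by positivity
  calc a - b ≤ 1/(3*b^2) := by rwa [le_div_iff₀ h3]
    _ = 1/3 * (1/b^2) := by ring

/-- solution of the recurrence `μ(n) = 1/3 + (4/(3n))·Σ_{k=1}^{n−1} μ(k)`
for the homogeneous lamination: exact Gamma formula and asymptotic expansion. -/
theorem stmt_10 (μ : ℕ → ℝ)
    (hrec : ∀ n : ℕ, 1 ≤ n →
      μ n = 1/3 + (4 / (3 * (n : ℝ))) * ∑ k ∈ Finset.Ico 1 n, μ k) :
    (∀ n : ℕ, 1 ≤ n →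
        μ n = Real.Gamma ((n : ℝ) + 4/3) / (Real.Gamma (4/3) * (n ! : ℝ)) - 1) ∧
    ∃ C : ℝ, ∀ n : ℕ, 1 ≤ n →
        |μ n - ((n : ℝ) ^ ((1:ℝ)/3) / Real.Gamma (4/3) - 1)|
          ≤ C * (n : ℝ) ^ (-(2:ℝ)/3) := by
  have hG : 0 < Real.Gamma (4/3) := Real.Gamma_pos_of_pos (by norm_num)
  have hmu := mu_eq_auxP μ hrec
  have hexact : ∀ n : ℕ, 1 ≤ n →
      μ n = Real.Gamma ((n : ℝ) + 4/3) / (Real.Gamma (4/3) * (n ! : ℝ)) - 1 := by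
    intro n hn
    have hfp : (0:ℝ) < (n ! : ℝ) := by exact_mod_cast Nat.factorial_pos n
    rw [hmu n hn, auxP_gamma n]
    field_simp
  refine ⟨hexact, 1/(3*Real.Gamma (4/3)), fun n hn => ?_⟩
  have ht : (1:ℝ) ≤ (n:ℝ) := by exact_mod_cast hn
  have ht0 : (0:ℝ) < (n:ℝ) := by linarith
  have hfp : (0:ℝ) < (n ! : ℝ) := by exact_mod_cast Nat.factorial_pos n
  have hfac : Real.Gamma ((n:ℝ)+1) = (n ! : ℝ) := Real.Gamma_nat_eq_factorial n
  have hup := gautschi_upper (n:ℝ) ht0.le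
  have hlo := gautschi_lower (n:ℝ) ht0.le
  rw [hfac] at hup hlo
  set X := Real.Gamma ((n:ℝ)+4/3) / (n ! : ℝ) with hXdef
  set b := (n:ℝ) ^ ((1:ℝ)/3) with hbdef
  have hX1 : b ≤ X := (le_div_iff₀ hfp).mpr (by linarith [hlo])
  have hX2 : X ≤ ((n:ℝ)+1) ^ ((1:ℝ)/3) := by
    rw [hXdef, div_le_iff₀ hfp]
    linarith [hup]
  have hd : |X - b| ≤ (1/3) * (n:ℝ) ^ (-(2:ℝ)/3) := by
    have hpos : (0:ℝ) < (n:ℝ) ^ (-(2:ℝ)/3) := Real.rpow_pos_of_pos ht0 _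
    rw [abs_le]
    constructor
    · nlinarith
    · have := cube_diff (n:ℝ) ht
      linarith
  have hgoal : μ n - ((n : ℝ) ^ ((1:ℝ)/3) / Real.Gamma (4/3) - 1)
      = (X - b) / Real.Gamma (4/3) := by
    rw [hexact n hn, hXdef, hbdef]
    field_simp
    ring
  rw [hgoal, abs_div, abs_of_pos hG]
  calc |X - b| / Real.Gamma (4/3)
      ≤ ((1/3) * (n:ℝ) ^ (-(2:ℝ)/3)) / Real.Gamma (4/3) :=
        (div_le_div_iff_of_pos_right hG).mpr hd
    _ = 1/(3*Real.Gamma (4/3)) * (n:ℝ) ^ (-(2:ℝ)/3) := by ring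
end

section
/- Let 0 < κ < b, γ ∈ (0,1), C ≥ 0 and n₀ ∈ ℕ, and let d : ℕ → [0,∞) satisfy, for all n ≥ n₀, d(n) ≤ (1−γ)·n^{−κ}·max{ d(i)·(max(i,1))^{κ} : 0 ≤ i < n } + C·n^{−b}. Then there exists a constant K such that d(n) ≤ K·n^{−κ} for all n ≥ 1. -/
/-- the real-sequence induction behind the rate-of-convergence estimates:
if `d(n) ≤ (1−γ)·n^{−κ}·max{d(i)·(max(i,1))^κ : i < n} + C·n^{−b}` for `n ≥ n₀`
(with `0 < κ < b`, `γ ∈ (0,1)`, `C ≥ 0`), then `d(n) = O(n^{−κ})`. -/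
theorem stmt_18 (κ b γ C : ℝ) (hκ : 0 < κ) (hκb : κ < b) (hγ0 : 0 < γ) (hγ1 : γ < 1)
    (hC : 0 ≤ C) (n₀ : ℕ) (d : ℕ → ℝ) (hd : ∀ n, 0 ≤ d n)
    (hrec : ∀ n : ℕ, n₀ ≤ n → ∀ hn : 0 < n,
      d n ≤ (1 - γ) * (n : ℝ) ^ (-κ)
              * (Finset.range n).sup' (Finset.nonempty_range_iff.mpr hn.ne')
                  (fun i => d i * (max (i : ℝ) 1) ^ κ)
            + C * (n : ℝ) ^ (-b)) :
    ∃ K : ℝ, ∀ n : ℕ, 1 ≤ n → d n ≤ K * (n : ℝ) ^ (-κ) := by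
  set e : ℕ → ℝ := fun i => d i * (max (i : ℝ) 1) ^ κ with he
  have he0 : ∀ i, 0 ≤ e i := by
    intro i
    exact mul_nonneg (hd i) (Real.rpow_nonneg (le_trans zero_le_one (le_max_right _ _)) _)
  have hne : ((Finset.range (n₀ + 1)).Nonempty) := Finset.nonempty_range_iff.mpr (Nat.succ_ne_zero _)
  set K : ℝ := max (C / γ) ((Finset.range (n₀ + 1)).sup' hne e) with hK
  have hCK : C ≤ γ * K := by
    have : C / γ ≤ K := le_max_left _ _
    calc C = γ * (C / γ) := by field_simp
    _ ≤ γ * K := by exact mul_le_mul_of_nonneg_left this hγ0.le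
  -- main claim: e is bounded by K
  have hmain : ∀ n, e n ≤ K := by
    intro n
    induction n using Nat.strong_induction_on with
    | _ n ih =>
      by_cases hn : n ≤ n₀
      · refine le_trans ?_ (le_max_right (C / γ) _)
        exact Finset.le_sup' e (Finset.mem_range.mpr (Nat.lt_succ_of_le hn))
      · push_neg at hn
        have hn1 : 0 < n := lt_of_le_of_lt (Nat.zero_le _) hn
        have hnR : (1 : ℝ) ≤ (n : ℝ) := by exact_mod_cast hn1
        have hnpos : (0 : ℝ) < (n : ℝ) := by exact_mod_cast hn1
        have hrecn := hrec n hn.le hn1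
        have hsup : (Finset.range n).sup' (Finset.nonempty_range_iff.mpr hn1.ne') e ≤ K :=
          Finset.sup'_le _ _ fun i hi => ih i (Finset.mem_range.mp hi)
        have hmaxn : max (n : ℝ) 1 = (n : ℝ) := max_eq_left hnR
        have hpow : (n : ℝ) ^ (-κ) * (n : ℝ) ^ κ = 1 := by
          rw [← Real.rpow_add hnpos]; simp
        have hpb : (n : ℝ) ^ (-b) * (n : ℝ) ^ κ ≤ 1 := by
          rw [← Real.rpow_add hnpos]
          exact Real.rpow_le_one_of_one_le_of_nonpos hnR (by linarith)
        have hM0 : 0 ≤ (Finset.range n).sup' (Finset.nonempty_range_iff.mpr hn1.ne') e := by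
          refine le_trans (he0 0) (Finset.le_sup' e (Finset.mem_range.mpr hn1))
        have hKnn : 0 ≤ K := le_trans hM0 hsup
        have : e n = d n * (n : ℝ) ^ κ := by rw [he]; simp [hmaxn]
        rw [this]
        have hstep : d n * (n : ℝ) ^ κ ≤
            ((1 - γ) * (n : ℝ) ^ (-κ)
              * (Finset.range n).sup' (Finset.nonempty_range_iff.mpr hn1.ne') e
              + C * (n : ℝ) ^ (-b)) * (n : ℝ) ^ κ :=
          mul_le_mul_of_nonneg_right hrecn (Real.rpow_nonneg hnpos.le _)
        refine le_trans hstep ?_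
        have hexpand : ((1 - γ) * (n : ℝ) ^ (-κ)
              * (Finset.range n).sup' (Finset.nonempty_range_iff.mpr hn1.ne') e
              + C * (n : ℝ) ^ (-b)) * (n : ℝ) ^ κ
            = (1 - γ) * (Finset.range n).sup' (Finset.nonempty_range_iff.mpr hn1.ne') e
                * ((n : ℝ) ^ (-κ) * (n : ℝ) ^ κ)
              + C * ((n : ℝ) ^ (-b) * (n : ℝ) ^ κ) := by ring
        rw [hexpand, hpow, mul_one]
        have h1 : (1 - γ) * (Finset.range n).sup' (Finset.nonempty_range_iff.mpr hn1.ne') e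
            ≤ (1 - γ) * K := mul_le_mul_of_nonneg_left hsup (by linarith)
        have h2 : C * ((n : ℝ) ^ (-b) * (n : ℝ) ^ κ) ≤ C := by
          nlinarith [mul_nonneg (Real.rpow_nonneg hnpos.le (-b)) (Real.rpow_nonneg hnpos.le κ)]
        nlinarith
  refine ⟨K, fun n hn => ?_⟩
  have hnR : (1 : ℝ) ≤ (n : ℝ) := by exact_mod_cast hn
  have hnpos : (0 : ℝ) < (n : ℝ) := by linarith
  have hen := hmain n
  have hmaxn : max (n : ℝ) 1 = (n : ℝ) := max_eq_left hnR
  have hen' : d n * (n : ℝ) ^ κ ≤ K := by rw [he] at hen; simpa [hmaxn] using hen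
  have hmul := mul_le_mul_of_nonneg_right hen' (Real.rpow_nonneg hnpos.le (-κ))
  have hpow : (n : ℝ) ^ κ * (n : ℝ) ^ (-κ) = 1 := by
    rw [← Real.rpow_add hnpos]; simp
  calc d n = d n * ((n : ℝ) ^ κ * (n : ℝ) ^ (-κ)) := by rw [hpow, mul_one]
  _ = d n * (n : ℝ) ^ κ * (n : ℝ) ^ (-κ) := by ring
  _ ≤ K * (n : ℝ) ^ (-κ) := hmul
end
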